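/- arXiv:1309.4802 — 3 statements merged into one kernel-verified Lean document; each statement's English description precedes it below -/
import Mathlib

section
/- For each β ∈ {★31, 3★1, 31★}, under the bidirectional replacement 123 ↔ β all identity permutations of length at least 4 are equivalent to one another: id_m ≡ id_n for all m, n ≥ 4. -/
/-!
Pattern-replacement equivalences between permutations of different lengths
(arXiv:1309.4802). A ★-pattern is encoded as a `List (Option ℕ)`, where `none`
is the placeholder ★ and `some k` an integer entry.
-/

/-- A ★-pattern / star-string entry: `none` is ★, `some k` an integer `k`. -/
abbrev SPat := List (Option ℕ)

/-- The integer entries of a star-string, in order. -/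
def ints (ρ : SPat) : List ℕ := ρ.filterMap id

/-- Two lists of naturals are order-isomorphic. -/
def OrdIso (u v : List ℕ) : Prop :=
  u.length = v.length ∧
  ∀ i j, i < u.length → j < u.length → (u.getD i 0 < u.getD j 0 ↔ v.getD i 0 < v.getD j 0)

/-- A valid string of distinct positive integers and ★'s. -/
def StarStr (ρ : SPat) : Prop := (ints ρ).Nodup ∧ ∀ k ∈ ints ρ, 0 < k

/-- `r` (entry by entry) forms a copy of the ★-pattern `δ`: ★'s in the same
positions, and the integer entries order-isomorphic. -/
def IsCopy (r δ : SPat) : Prop :=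
  r.length = δ.length ∧
  (∀ i, (r.getD i none = none ↔ δ.getD i none = none)) ∧
  OrdIso (ints r) (ints δ)

/-- `Repl a b ρ₁ ρ₂` : `ρ₂` is obtained from `ρ₁` by replacing an occurrence of `a`
as a (not necessarily contiguous) substring of `ρ₁` by `b`, entry by entry at the
same positions. -/
inductive Repl : SPat → SPat → SPat → SPat → Prop
  | nil : Repl [] [] [] []
  | keep {a b ρ₁ ρ₂} (x : Option ℕ) : Repl a b ρ₁ ρ₂ → Repl a b (x :: ρ₁) (x :: ρ₂)
  | repl {a b ρ₁ ρ₂} (x y : Option ℕ) :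
      Repl a b ρ₁ ρ₂ → Repl (x :: a) (y :: b) (x :: ρ₁) (y :: ρ₂)

/-- `π` is a permutation of `1, …, n` (as a list). -/
def IsPermList (π : List ℕ) : Prop := π.Perm (List.range' 1 π.length)

/-- `σ` is a result of the replacement `α → β` applied to the permutation `π`:
(1) `ρ₁` is `π` renumbered (order-isomorphically) with ★'s inserted anywhere;
(2) a substring `a` of `ρ₁` forming a copy of `α` is replaced (in place) by a
string `b` that is a copy of `β`, whose integers meet `ρ₁` only inside `a`, and
which agrees with `a` on the integer entries common to `α` and `β`;
(3) dropping ★'s and renumbering gives the permutation `σ`. -/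
def IsResult (α β : SPat) (π σ : List ℕ) : Prop :=
  ∃ ρ₁ ρ₂ a b : SPat,
    StarStr ρ₁ ∧ OrdIso π (ints ρ₁) ∧
    IsCopy a α ∧
    StarStr b ∧ IsCopy b β ∧
    (∀ k ∈ ints b, k ∈ ints ρ₁ → k ∈ ints a) ∧
    (∀ i j x, α.getD i none = some x → β.getD j none = some x →
      a.getD i none = b.getD j none) ∧
    Repl a b ρ₁ ρ₂ ∧
    IsPermList σ ∧ OrdIso (ints ρ₂) σ

/-- Equivalence under the bidirectional replacement `α ↔ β`: a finite sequence
of `α → β` and `β → α` replacements. -/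
def PermEquiv (α β : SPat) (π σ : List ℕ) : Prop :=
  Relation.ReflTransGen (fun τ υ => IsResult α β τ υ ∨ IsResult β α τ υ) π σ

/-- `π` is isolated under `α ↔ β`: no other permutation is equivalent to it. -/
def Isolated (α β : SPat) (π : List ℕ) : Prop :=
  ∀ σ : List ℕ, IsPermList σ → PermEquiv α β π σ → σ = π

/-- The identity permutation `1 2 ⋯ n`. -/
def idPerm (n : ℕ) : List ℕ := List.range' 1 n

/-- The reverse identity permutation `n (n-1) ⋯ 1`. -/
def ridPerm (n : ℕ) : List ℕ := (List.range' 1 n).reverse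

def pat123 : SPat := [some 1, some 2, some 3]
def pat132 : SPat := [some 1, some 3, some 2]
def patS32 : SPat := [none, some 3, some 2]
def pat3S2 : SPat := [some 3, none, some 2]
def pat32S : SPat := [some 3, some 2, none]
def patS31 : SPat := [none, some 3, some 1]
def pat3S1 : SPat := [some 3, none, some 1]
def pat31S : SPat := [some 3, some 1, none]
def patS21 : SPat := [none, some 2, some 1]
def pat2S1 : SPat := [some 2, none, some 1]
def pat21S : SPat := [some 2, some 1, none]
def pat12S : SPat := [some 1, some 2, none]
def pat1S3 : SPat := [some 1, none, some 3]
def patS23 : SPat := [none, some 2, some 3]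
def patS12 : SPat := [none, some 1, some 2]
def pat23S : SPat := [some 2, some 3, none]
def pat13S : SPat := [some 1, some 3, none]
def pat1S2 : SPat := [some 1, none, some 2]

section Infra

instance (u v : List ℕ) : Decidable (OrdIso u v) :=
  decidable_of_iff (u.length = v.length ∧ ∀ i < u.length, ∀ j < u.length,
      (u.getD i 0 < u.getD j 0 ↔ v.getD i 0 < v.getD j 0)) (by
    constructor
    · rintro ⟨h1, h2⟩; exact ⟨h1, fun i j hi hj => h2 i hi j hj⟩
    · rintro ⟨h1, h2⟩; exact ⟨h1, fun i hi j hj => h2 i j hi hj⟩)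

instance (r δ : SPat) : Decidable (IsCopy r δ) :=
  decidable_of_iff (r.length = δ.length ∧
      (∀ i < r.length, (r.getD i none = none ↔ δ.getD i none = none)) ∧
      OrdIso (ints r) (ints δ)) (by
    constructor
    · rintro ⟨h1, h2, h3⟩
      refine ⟨h1, fun i => ?_, h3⟩
      by_cases hi : i < r.length
      · exact h2 i hi
      · push_neg at hi
        rw [List.getD_eq_default _ _ hi, List.getD_eq_default _ _ (h1 ▸ hi)]
    · rintro ⟨h1, h2, h3⟩; exact ⟨h1, fun i _ => h2 i, h3⟩)

instance (ρ : SPat) : Decidable (StarStr ρ) := by unfold StarStr; infer_instance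

instance (π : List ℕ) : Decidable (IsPermList π) := by unfold IsPermList; infer_instance

lemma isResult_of {α β : SPat} {π σ : List ℕ} (ρ₁ ρ₂ a b : SPat)
    (h8 : Repl a b ρ₁ ρ₂)
    (h1 : StarStr ρ₁) (h2 : OrdIso π (ints ρ₁)) (h3 : IsCopy a α)
    (h4 : StarStr b) (h5 : IsCopy b β)
    (h6 : ∀ k ∈ ints b, k ∈ ints ρ₁ → k ∈ ints a)
    (h7 : ∀ i < α.length, ∀ j < β.length,
        (α.getD i none).isSome = true → α.getD i none = β.getD j none →
        a.getD i none = b.getD j none)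
    (h9 : IsPermList σ) (h10 : OrdIso (ints ρ₂) σ) :
    IsResult α β π σ := by
  refine ⟨ρ₁, ρ₂, a, b, h1, h2, h3, h4, h5, h6, ?_, h8, h9, h10⟩
  intro i j x hx1 hx2
  have hi : i < α.length := by
    by_contra hi; push_neg at hi
    rw [List.getD_eq_default _ _ hi] at hx1; exact nomatch hx1
  have hj : j < β.length := by
    by_contra hj; push_neg at hj
    rw [List.getD_eq_default _ _ hj] at hx2; exact nomatch hx2
  exact h7 i hi j hj (by rw [hx1]; rfl) (hx1.trans hx2.symm)

lemma ints_append_some (l : SPat) (M : ℕ) : ints (l ++ [some M]) = ints l ++ [M] := by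
  simp [ints]

lemma le_foldr_max {x : ℕ} {l : List ℕ} (h : x ∈ l) : x ≤ l.foldr max 0 := by
  induction l with
  | nil => cases h
  | cons y t ih =>
    rcases List.mem_cons.1 h with rfl | h
    · exact le_max_left _ _
    · exact le_trans (ih h) (le_max_right _ _)

lemma ordIso_append {u v : List ℕ} {c d : ℕ} (h : OrdIso u v)
    (hc : ∀ x ∈ u, x < c) (hd : ∀ y ∈ v, y < d) :
    OrdIso (u ++ [c]) (v ++ [d]) := by
  obtain ⟨hl, hiff⟩ := h
  have hget : ∀ i < u.length, (u ++ [c]).getD i 0 = u.getD i 0 := fun i hi =>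
    List.getD_append _ _ _ _ hi
  have hget' : ∀ i < u.length, (v ++ [d]).getD i 0 = v.getD i 0 := fun i hi =>
    List.getD_append _ _ _ _ (hl ▸ hi)
  have hmem : ∀ i < u.length, u.getD i 0 ∈ u := fun i hi => by
    rw [List.getD_eq_getElem _ _ hi]; exact List.getElem_mem _
  have hmem' : ∀ i < u.length, v.getD i 0 ∈ v := fun i hi => by
    rw [List.getD_eq_getElem _ _ (hl ▸ hi)]; exact List.getElem_mem _
  have hc' : (u ++ [c]).getD u.length 0 = c := by
    rw [List.getD_eq_getElem]
    · simp
    · simp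
  have hd' : (v ++ [d]).getD u.length 0 = d := by
    rw [List.getD_eq_getElem]
    · simp [hl]
    · simp [hl]
  refine ⟨by simp [hl], ?_⟩
  intro i j hi hj
  simp only [List.length_append, List.length_singleton] at hi hj
  rcases lt_or_ge i u.length with hi' | hi' <;> rcases lt_or_ge j u.length with hj' | hj'
  · rw [hget i hi', hget j hj', hget' i hi', hget' j hj']; exact hiff i j hi' hj'
  · have hj'' : j = u.length := by omega
    subst hj''
    rw [hget i hi', hget' i hi', hc', hd']
    exact iff_of_true (hc _ (hmem i hi')) (hd _ (hmem' i hi'))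
  · have hi'' : i = u.length := by omega
    subst hi''
    rw [hget j hj', hget' j hj', hc', hd']
    exact iff_of_false (not_lt.2 (le_of_lt (hc _ (hmem j hj'))))
      (not_lt.2 (le_of_lt (hd _ (hmem' j hj'))))
  · have hi'' : i = u.length := by omega
    have hj'' : j = u.length := by omega
    subst hi''; subst hj''
    rw [hc', hd']
    exact iff_of_false (lt_irrefl _) (lt_irrefl _)

lemma range'_one_concat (n : ℕ) : List.range' 1 (n + 1) = List.range' 1 n ++ [n + 1] := by
  rw [List.range'_concat, Nat.one_mul, Nat.add_comm]

lemma repl_refl (l : SPat) : Repl [] [] l l := by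
  induction l with
  | nil => exact .nil
  | cons x t ih => exact .keep x ih

lemma repl_append {a b ρ₁ ρ₂ : SPat} (h : Repl a b ρ₁ ρ₂) (l : SPat) :
    Repl a b (ρ₁ ++ l) (ρ₂ ++ l) := by
  induction h with
  | nil => exact repl_refl l
  | keep x _ ih => exact .keep x ih
  | repl x y _ ih => exact .repl x y ih

lemma permList_lt {π : List ℕ} (h : IsPermList π) : ∀ x ∈ π, x < π.length + 1 := by
  intro x hx
  have := h.mem_iff.1 hx
  have := List.mem_range'_1.1 this
  omega

lemma permList_append {σ : List ℕ} (h : IsPermList σ) :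
    IsPermList (σ ++ [σ.length + 1]) := by
  unfold IsPermList at *
  have : List.range' 1 (σ ++ [σ.length + 1]).length
      = List.range' 1 σ.length ++ [σ.length + 1] := by
    rw [List.length_append, List.length_singleton]
    exact range'_one_concat σ.length
  rw [this]
  exact h.append (List.Perm.refl _)

lemma isResult_append {α β : SPat} {π σ : List ℕ} (hπ : IsPermList π)
    (h : IsResult α β π σ) :
    IsResult α β (π ++ [π.length + 1]) (σ ++ [σ.length + 1]) := by
  obtain ⟨ρ₁, ρ₂, a, b, h1, h2, h3, h4, h5, h6, h7, h8, h9, h10⟩ := h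
  set M : ℕ := (ints ρ₁ ++ ints ρ₂ ++ ints b).foldr max 0 + 1 with hM
  have hlt : ∀ x ∈ ints ρ₁ ++ ints ρ₂ ++ ints b, x < M := fun x hx => by
    have := le_foldr_max hx; omega
  have hρ₁M : ∀ x ∈ ints ρ₁, x < M := fun x hx =>
    hlt x (by simp [hx])
  have hρ₂M : ∀ x ∈ ints ρ₂, x < M := fun x hx =>
    hlt x (by simp [hx])
  have hbM : ∀ x ∈ ints b, x < M := fun x hx =>
    hlt x (by simp [hx])
  refine ⟨ρ₁ ++ [some M], ρ₂ ++ [some M], a, b, ?_, ?_, h3, h4, h5, ?_, h7, ?_, ?_, ?_⟩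
  · obtain ⟨hnd, hpos⟩ := h1
    unfold StarStr
    rw [ints_append_some]
    constructor
    · refine List.Nodup.append hnd (List.nodup_singleton M) ?_
      intro x hx hx'
      rw [List.mem_singleton] at hx'
      subst hx'
      exact lt_irrefl _ (hρ₁M M hx)
    · intro k hk
      rcases List.mem_append.1 hk with hk | hk
      · exact hpos k hk
      · rw [List.mem_singleton] at hk; omega
  · rw [ints_append_some]
    exact ordIso_append h2 (permList_lt hπ) hρ₁M
  · intro k hk hk'
    rw [ints_append_some] at hk'
    rcases List.mem_append.1 hk' with hk' | hk'
    · exact h6 k hk hk'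
    · rw [List.mem_singleton] at hk'
      exact absurd (hk' ▸ hbM k hk) (lt_irrefl _)
  · exact repl_append h8 _
  · exact permList_append h9
  · rw [ints_append_some]
    exact ordIso_append h10 hρ₂M (permList_lt h9)

lemma isResult_isPermList {α β : SPat} {π σ : List ℕ} (h : IsResult α β π σ) :
    IsPermList σ := by
  obtain ⟨_, _, _, _, _, _, _, _, _, _, _, _, h9, _⟩ := h
  exact h9

lemma permEquiv_append {α β : SPat} {π σ : List ℕ} (hπ : IsPermList π)
    (h : PermEquiv α β π σ) :
    PermEquiv α β (π ++ [π.length + 1]) (σ ++ [σ.length + 1]) ∧ IsPermList σ := by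
  induction h with
  | refl => exact ⟨.refl, hπ⟩
  | tail _ hstep ih =>
    obtain ⟨he, hmid⟩ := ih
    have hstep' := hstep
    rcases hstep with hs | hs
    · exact ⟨he.tail (Or.inl (isResult_append hmid hs)), isResult_isPermList hs⟩
    · exact ⟨he.tail (Or.inr (isResult_append hmid hs)), isResult_isPermList hs⟩

lemma idPerm_isPermList (n : ℕ) : IsPermList (idPerm n) := by
  unfold IsPermList idPerm
  rw [List.length_range']

lemma idPerm_append (n : ℕ) : idPerm n ++ [(idPerm n).length + 1] = idPerm (n + 1) := by
  unfold idPerm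
  rw [List.length_range', range'_one_concat]

lemma permEquiv_up {α β : SPat} (h45 : PermEquiv α β (idPerm 4) (idPerm 5)) :
    ∀ n, 4 ≤ n → PermEquiv α β (idPerm n) (idPerm (n + 1)) := by
  intro n hn
  induction n, hn using Nat.le_induction with
  | base => exact h45
  | succ n hn ih =>
    have := (permEquiv_append (idPerm_isPermList n) ih).1
    rwa [idPerm_append, idPerm_append] at this

lemma permEquiv_down {α β : SPat} (h54 : PermEquiv α β (idPerm 5) (idPerm 4)) :
    ∀ n, 4 ≤ n → PermEquiv α β (idPerm (n + 1)) (idPerm n) := by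
  intro n hn
  induction n, hn using Nat.le_induction with
  | base => exact h54
  | succ n hn ih =>
    have := (permEquiv_append (idPerm_isPermList (n + 1)) ih).1
    rwa [idPerm_append, idPerm_append] at this

lemma main_of_base {α β : SPat}
    (h45 : PermEquiv α β (idPerm 4) (idPerm 5))
    (h54 : PermEquiv α β (idPerm 5) (idPerm 4)) :
    ∀ m n : ℕ, 4 ≤ m → 4 ≤ n → PermEquiv α β (idPerm m) (idPerm n) := by
  have up : ∀ m, 4 ≤ m → ∀ k, PermEquiv α β (idPerm m) (idPerm (m + k)) := by
    intro m hm k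
    induction k with
    | zero => exact .refl
    | succ k ih => exact ih.trans (permEquiv_up h45 (m + k) (by omega))
  have down : ∀ n, 4 ≤ n → ∀ k, PermEquiv α β (idPerm (n + k)) (idPerm n) := by
    intro n hn k
    induction k with
    | zero => exact .refl
    | succ k ih => exact (permEquiv_down h54 (n + k) (by omega)).trans ih
  intro m n hm hn
  rcases Nat.le_total m n with h | h
  · obtain ⟨k, rfl⟩ := Nat.exists_eq_add_of_le h
    exact up m hm k
  · obtain ⟨k, rfl⟩ := Nat.exists_eq_add_of_le h
    exact down n hn k

end Infra

lemma step_S31_up45_0 : IsResult pat123 patS31 [1, 2, 3, 4] [3, 2, 1] :=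
  isResult_of [some 10, some 20, some 30, some 40] [none, some 40, some 30, some 10] [some 10, some 20, some 40] [none, some 40, some 10]
    (Repl.repl _ _ (Repl.repl _ _ (Repl.keep _ (Repl.repl _ _ Repl.nil))))
    (by decide) (by decide) (by decide) (by decide) (by decide) (by decide) (by decide)
    (by decide) (by decide)

lemma step_S31_up45_1 : IsResult patS31 pat123 [3, 2, 1] [2, 3, 4, 1] :=
  isResult_of [none, some 30, some 20, some 10] [some 20, some 25, some 30, some 10] [none, some 30, some 20] [some 20, some 25, some 30]
    (Repl.repl _ _ (Repl.repl _ _ (Repl.repl _ _ (Repl.keep _ Repl.nil))))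
    (by decide) (by decide) (by decide) (by decide) (by decide) (by decide) (by decide)
    (by decide) (by decide)

lemma step_S31_up45_2 : IsResult patS31 pat123 [2, 3, 4, 1] [1, 2, 3, 4, 5] :=
  isResult_of [none, some 20, some 30, some 40, some 10] [some 10, some 20, some 30, some 35, some 40] [none, some 40, some 10] [some 10, some 35, some 40]
    (Repl.repl _ _ (Repl.keep _ (Repl.keep _ (Repl.repl _ _ (Repl.repl _ _ Repl.nil)))))
    (by decide) (by decide) (by decide) (by decide) (by decide) (by decide) (by decide)
    (by decide) (by decide)

lemma chain_S31_up45 : PermEquiv pat123 patS31 (idPerm 4) (idPerm 5) := by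
  have h1 : idPerm 4 = [1, 2, 3, 4] := by decide
  have h2 : idPerm 5 = [1, 2, 3, 4, 5] := by decide
  rw [h1, h2]
  exact (Relation.ReflTransGen.tail (Relation.ReflTransGen.tail (Relation.ReflTransGen.tail Relation.ReflTransGen.refl (Or.inl step_S31_up45_0)) (Or.inr step_S31_up45_1)) (Or.inr step_S31_up45_2))

lemma step_S31_dn54_0 : IsResult pat123 patS31 [1, 2, 3, 4, 5] [2, 1, 3, 4] :=
  isResult_of [some 10, some 20, some 30, some 40, some 50] [none, some 30, some 10, some 40, some 50] [some 10, some 20, some 30] [none, some 30, some 10]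
    (Repl.repl _ _ (Repl.repl _ _ (Repl.repl _ _ (Repl.keep _ (Repl.keep _ Repl.nil)))))
    (by decide) (by decide) (by decide) (by decide) (by decide) (by decide) (by decide)
    (by decide) (by decide)

lemma step_S31_dn54_1 : IsResult pat123 patS31 [2, 1, 3, 4] [1, 3, 2] :=
  isResult_of [some 20, some 10, some 30, some 40] [none, some 10, some 40, some 20] [some 20, some 30, some 40] [none, some 40, some 20]
    (Repl.repl _ _ (Repl.keep _ (Repl.repl _ _ (Repl.repl _ _ Repl.nil))))
    (by decide) (by decide) (by decide) (by decide) (by decide) (by decide) (by decide)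
    (by decide) (by decide)

lemma step_S31_dn54_2 : IsResult patS31 pat123 [1, 3, 2] [1, 2, 3, 4] :=
  isResult_of [some 10, none, some 30, some 20] [some 10, some 20, some 25, some 30] [none, some 30, some 20] [some 20, some 25, some 30]
    (Repl.keep _ (Repl.repl _ _ (Repl.repl _ _ (Repl.repl _ _ Repl.nil))))
    (by decide) (by decide) (by decide) (by decide) (by decide) (by decide) (by decide)
    (by decide) (by decide)

lemma chain_S31_dn54 : PermEquiv pat123 patS31 (idPerm 5) (idPerm 4) := by
  have h1 : idPerm 5 = [1, 2, 3, 4, 5] := by decide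
  have h2 : idPerm 4 = [1, 2, 3, 4] := by decide
  rw [h1, h2]
  exact (Relation.ReflTransGen.tail (Relation.ReflTransGen.tail (Relation.ReflTransGen.tail Relation.ReflTransGen.refl (Or.inl step_S31_dn54_0)) (Or.inl step_S31_dn54_1)) (Or.inr step_S31_dn54_2))

lemma step_3S1_up45_0 : IsResult pat123 pat3S1 [1, 2, 3, 4] [3, 2, 1] :=
  isResult_of [some 10, some 20, some 30, some 40] [some 40, none, some 30, some 10] [some 10, some 20, some 40] [some 40, none, some 10]
    (Repl.repl _ _ (Repl.repl _ _ (Repl.keep _ (Repl.repl _ _ Repl.nil))))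
    (by decide) (by decide) (by decide) (by decide) (by decide) (by decide) (by decide)
    (by decide) (by decide)

lemma step_3S1_up45_1 : IsResult pat3S1 pat123 [3, 2, 1] [1, 3, 2, 4] :=
  isResult_of [some 30, none, some 20, some 10] [some 10, some 25, some 20, some 30] [some 30, none, some 10] [some 10, some 25, some 30]
    (Repl.repl _ _ (Repl.repl _ _ (Repl.keep _ (Repl.repl _ _ Repl.nil))))
    (by decide) (by decide) (by decide) (by decide) (by decide) (by decide) (by decide)
    (by decide) (by decide)

lemma step_3S1_up45_2 : IsResult pat3S1 pat123 [1, 3, 2, 4] [1, 2, 3, 4, 5] :=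
  isResult_of [some 10, some 30, none, some 20, some 40] [some 10, some 20, some 25, some 30, some 40] [some 30, none, some 20] [some 20, some 25, some 30]
    (Repl.keep _ (Repl.repl _ _ (Repl.repl _ _ (Repl.repl _ _ (Repl.keep _ Repl.nil)))))
    (by decide) (by decide) (by decide) (by decide) (by decide) (by decide) (by decide)
    (by decide) (by decide)

lemma chain_3S1_up45 : PermEquiv pat123 pat3S1 (idPerm 4) (idPerm 5) := by
  have h1 : idPerm 4 = [1, 2, 3, 4] := by decide
  have h2 : idPerm 5 = [1, 2, 3, 4, 5] := by decide
  rw [h1, h2]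
  exact (Relation.ReflTransGen.tail (Relation.ReflTransGen.tail (Relation.ReflTransGen.tail Relation.ReflTransGen.refl (Or.inl step_3S1_up45_0)) (Or.inr step_3S1_up45_1)) (Or.inr step_3S1_up45_2))

lemma step_3S1_dn54_0 : IsResult pat123 pat3S1 [1, 2, 3, 4, 5] [1, 3, 2, 4] :=
  isResult_of [some 10, some 20, some 30, some 40, some 50] [some 10, some 40, none, some 20, some 50] [some 20, some 30, some 40] [some 40, none, some 20]
    (Repl.keep _ (Repl.repl _ _ (Repl.repl _ _ (Repl.repl _ _ (Repl.keep _ Repl.nil)))))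
    (by decide) (by decide) (by decide) (by decide) (by decide) (by decide) (by decide)
    (by decide) (by decide)

lemma step_3S1_dn54_1 : IsResult pat123 pat3S1 [1, 3, 2, 4] [3, 2, 1] :=
  isResult_of [some 10, some 30, some 20, some 40] [some 40, none, some 20, some 10] [some 10, some 30, some 40] [some 40, none, some 10]
    (Repl.repl _ _ (Repl.repl _ _ (Repl.keep _ (Repl.repl _ _ Repl.nil))))
    (by decide) (by decide) (by decide) (by decide) (by decide) (by decide) (by decide)
    (by decide) (by decide)

lemma step_3S1_dn54_2 : IsResult pat3S1 pat123 [3, 2, 1] [1, 2, 3, 4] :=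
  isResult_of [some 30, none, some 20, some 10] [some 10, some 15, some 20, some 30] [some 30, none, some 10] [some 10, some 15, some 30]
    (Repl.repl _ _ (Repl.repl _ _ (Repl.keep _ (Repl.repl _ _ Repl.nil))))
    (by decide) (by decide) (by decide) (by decide) (by decide) (by decide) (by decide)
    (by decide) (by decide)

lemma chain_3S1_dn54 : PermEquiv pat123 pat3S1 (idPerm 5) (idPerm 4) := by
  have h1 : idPerm 5 = [1, 2, 3, 4, 5] := by decide
  have h2 : idPerm 4 = [1, 2, 3, 4] := by decide
  rw [h1, h2]
  exact (Relation.ReflTransGen.tail (Relation.ReflTransGen.tail (Relation.ReflTransGen.tail Relation.ReflTransGen.refl (Or.inl step_3S1_dn54_0)) (Or.inl step_3S1_dn54_1)) (Or.inr step_3S1_dn54_2))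

lemma step_31S_up45_0 : IsResult pat123 pat31S [1, 2, 3, 4] [2, 1, 3] :=
  isResult_of [some 10, some 20, some 30, some 40] [some 30, some 10, none, some 40] [some 10, some 20, some 30] [some 30, some 10, none]
    (Repl.repl _ _ (Repl.repl _ _ (Repl.repl _ _ (Repl.keep _ Repl.nil))))
    (by decide) (by decide) (by decide) (by decide) (by decide) (by decide) (by decide)
    (by decide) (by decide)

lemma step_31S_up45_1 : IsResult pat31S pat123 [2, 1, 3] [1, 2, 4, 3] :=
  isResult_of [some 20, some 10, some 30, none] [some 10, some 15, some 30, some 20] [some 20, some 10, none] [some 10, some 15, some 20]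
    (Repl.repl _ _ (Repl.repl _ _ (Repl.keep _ (Repl.repl _ _ Repl.nil))))
    (by decide) (by decide) (by decide) (by decide) (by decide) (by decide) (by decide)
    (by decide) (by decide)

lemma step_31S_up45_2 : IsResult pat31S pat123 [1, 2, 4, 3] [1, 2, 3, 4, 5] :=
  isResult_of [some 10, some 20, some 40, some 30, none] [some 10, some 20, some 30, some 35, some 40] [some 40, some 30, none] [some 30, some 35, some 40]
    (Repl.keep _ (Repl.keep _ (Repl.repl _ _ (Repl.repl _ _ (Repl.repl _ _ Repl.nil)))))
    (by decide) (by decide) (by decide) (by decide) (by decide) (by decide) (by decide)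
    (by decide) (by decide)

lemma chain_31S_up45 : PermEquiv pat123 pat31S (idPerm 4) (idPerm 5) := by
  have h1 : idPerm 4 = [1, 2, 3, 4] := by decide
  have h2 : idPerm 5 = [1, 2, 3, 4, 5] := by decide
  rw [h1, h2]
  exact (Relation.ReflTransGen.tail (Relation.ReflTransGen.tail (Relation.ReflTransGen.tail Relation.ReflTransGen.refl (Or.inl step_31S_up45_0)) (Or.inr step_31S_up45_1)) (Or.inr step_31S_up45_2))

lemma step_31S_dn54_0 : IsResult pat123 pat31S [1, 2, 3, 4, 5] [2, 1, 3, 4] :=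
  isResult_of [some 10, some 20, some 30, some 40, some 50] [some 30, some 10, none, some 40, some 50] [some 10, some 20, some 30] [some 30, some 10, none]
    (Repl.repl _ _ (Repl.repl _ _ (Repl.repl _ _ (Repl.keep _ (Repl.keep _ Repl.nil)))))
    (by decide) (by decide) (by decide) (by decide) (by decide) (by decide) (by decide)
    (by decide) (by decide)

lemma step_31S_dn54_1 : IsResult pat123 pat31S [2, 1, 3, 4] [3, 1, 2] :=
  isResult_of [some 20, some 10, some 30, some 40] [some 40, some 10, some 20, none] [some 20, some 30, some 40] [some 40, some 20, none]
    (Repl.repl _ _ (Repl.keep _ (Repl.repl _ _ (Repl.repl _ _ Repl.nil))))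
    (by decide) (by decide) (by decide) (by decide) (by decide) (by decide) (by decide)
    (by decide) (by decide)

lemma step_31S_dn54_2 : IsResult pat31S pat123 [3, 1, 2] [1, 2, 3, 4] :=
  isResult_of [some 30, some 10, some 20, none] [some 10, some 15, some 20, some 30] [some 30, some 10, none] [some 10, some 15, some 30]
    (Repl.repl _ _ (Repl.repl _ _ (Repl.keep _ (Repl.repl _ _ Repl.nil))))
    (by decide) (by decide) (by decide) (by decide) (by decide) (by decide) (by decide)
    (by decide) (by decide)

lemma chain_31S_dn54 : PermEquiv pat123 pat31S (idPerm 5) (idPerm 4) := by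
  have h1 : idPerm 5 = [1, 2, 3, 4, 5] := by decide
  have h2 : idPerm 4 = [1, 2, 3, 4] := by decide
  rw [h1, h2]
  exact (Relation.ReflTransGen.tail (Relation.ReflTransGen.tail (Relation.ReflTransGen.tail Relation.ReflTransGen.refl (Or.inl step_31S_dn54_0)) (Or.inl step_31S_dn54_1)) (Or.inr step_31S_dn54_2))

/-- for `β ∈ {★31, 3★1, 31★}`, all identity permutations of length
at least 4 are equivalent under `123 ↔ β`. -/
theorem identities_equiv_31 :
    ∀ β ∈ ([patS31, pat3S1, pat31S] : List SPat),
    ∀ m n : ℕ, 4 ≤ m → 4 ≤ n → PermEquiv pat123 β (idPerm m) (idPerm n) := by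
  intro β hβ
  simp only [List.mem_cons, List.mem_singleton, List.not_mem_nil, or_false] at hβ
  rcases hβ with rfl | rfl | rfl
  · exact main_of_base chain_S31_up45 chain_S31_dn54
  · exact main_of_base chain_3S1_up45 chain_3S1_dn54
  · exact main_of_base chain_31S_up45 chain_31S_dn54
end

section
/- For γ ∈ {12★, 1★3}: if a permutation σ is the result of applying the replacement 123 → γ to a permutation π, then p_γ(π) = p_γ(σ). -/
/-- `l` contains a (not necessarily contiguous) copy of the pattern `123`. -/
def contains123 (l : List ℕ) : Prop :=
  ∃ i j k, i < j ∧ j < k ∧ k < l.length ∧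
    l.getD i 0 < l.getD j 0 ∧ l.getD j 0 < l.getD k 0

/-- All copies of `123` in `l` (as triples of 0-indexed positions), listed in
lexicographic order: first by position of the smallest element, then of the
middle element, then of the largest element. -/
def triples123 (l : List ℕ) : List (ℕ × ℕ × ℕ) :=
  (List.range l.length).flatMap fun i =>
    (List.range l.length).flatMap fun j =>
      (List.range l.length).filterMap fun k =>
        if i < j ∧ j < k ∧ l.getD i 0 < l.getD j 0 ∧ l.getD j 0 < l.getD k 0
        then some (i, j, k) else none

/-- The leftmost copy of `123` in `l`, if any. -/
def leftmost123 (l : List ℕ) : Option (ℕ × ℕ × ℕ) := (triples123 l).head?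

/-- Repeatedly (with fuel) erase, from the leftmost copy of `123`, the entry at
the position selected by `d`, until no copy of `123` remains. -/
def pIter (d : ℕ × ℕ × ℕ → ℕ) : ℕ → List ℕ → List ℕ
  | 0, l => l
  | n + 1, l =>
    match leftmost123 l with
    | none => l
    | some t => pIter d n (l.eraseIdx (d t))

/-- Renumber a list of distinct naturals, preserving relative order, into a
permutation of `1, …, n`. -/
def renumber (l : List ℕ) : List ℕ := l.map fun x => (l.filter fun y => y ≤ x).length

def pGamma (d : ℕ × ℕ × ℕ → ℕ) (l : List ℕ) : List ℕ := renumber (pIter d l.length l)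

/-- `p_γ` for `γ = 12★`: repeatedly delete the largest element of the leftmost
copy of `123`, then renumber. -/
def p12star (l : List ℕ) : List ℕ := pGamma (fun t => t.2.2) l

/-- `p_γ` for `γ = 1★3`: repeatedly delete the middle element of the leftmost
copy of `123`, then renumber. -/
def p1star3 (l : List ℕ) : List ℕ := pGamma (fun t => t.2.1) l
/-! ### Auxiliary development -/

section Aux

/-- `(i,j,k)` is a copy of `123` in `l`. -/
def Tri (l : List ℕ) (i j k : ℕ) : Prop :=
  i < j ∧ j < k ∧ k < l.length ∧ l.getD i 0 < l.getD j 0 ∧ l.getD j 0 < l.getD k 0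

/-- One step of the greedy deletion process, at an arbitrary copy of `123`. -/
def Step (d : ℕ × ℕ × ℕ → ℕ) (l m : List ℕ) : Prop :=
  ∃ i j k, Tri l i j k ∧ m = l.eraseIdx (d (i, j, k))

lemma mem_triples123 {l : List ℕ} {i j k : ℕ} :
    (i, j, k) ∈ triples123 l ↔ Tri l i j k := by
  simp only [triples123, List.mem_flatMap, List.mem_filterMap, List.mem_range, Tri]
  constructor
  · rintro ⟨a, ha, b, hb, c, hc, h⟩
    split at h
    · next hcond =>
      simp only [Option.some.injEq, Prod.mk.injEq] at h
      obtain ⟨rfl, rfl, rfl⟩ := h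
      exact ⟨hcond.1, hcond.2.1, hc, hcond.2.2⟩
    · simp at h
  · rintro ⟨h1, h2, h3, h4, h5⟩
    exact ⟨i, by omega, ⟨j, by omega, ⟨k, h3, by rw [if_pos ⟨h1, h2, h4, h5⟩]⟩⟩⟩

lemma leftmost123_none {l : List ℕ} (h : leftmost123 l = none) : ∀ i j k, ¬ Tri l i j k := by
  intro i j k ht
  have hm : (i, j, k) ∈ triples123 l := mem_triples123.mpr ht
  rw [leftmost123, List.head?_eq_none_iff] at h
  simp [h] at hm

lemma leftmost123_some {l : List ℕ} {t} (h : leftmost123 l = some t) :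
    Tri l t.1 t.2.1 t.2.2 := by
  have hm : t ∈ triples123 l := List.mem_of_mem_head? (Option.mem_def.mpr h)
  obtain ⟨i, j, k⟩ := t
  exact mem_triples123.mp hm

lemma aux_getD_eraseIdx (l : List ℕ) (k p : ℕ) (hp : p < (l.eraseIdx k).length) :
    (l.eraseIdx k).getD p 0 = l.getD (if p < k then p else p + 1) 0 := by
  have hlen : p < (l.eraseIdx k).length := hp
  rw [List.length_eraseIdx] at hlen
  rw [List.getD_eq_getElem _ _ hp, List.getElem_eraseIdx]
  split
  · next h => rw [List.getD_eq_getElem]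
  · next h => rw [List.getD_eq_getElem]

lemma tri_eraseIdx {l : List ℕ} {i j k p : ℕ} (h : Tri l i j k)
    (hp : p < l.length) (hi : i ≠ p) (hj : j ≠ p) (hk : k ≠ p) :
    Tri (l.eraseIdx p) (if i < p then i else i - 1) (if j < p then j else j - 1)
      (if k < p then k else k - 1) := by
  obtain ⟨h1, h2, h3, h4, h5⟩ := h
  have hlen : (l.eraseIdx p).length = l.length - 1 := by
    rw [List.length_eraseIdx, if_pos hp]
  have key : ∀ q, q ≠ p → q < l.length →
      (l.eraseIdx p).getD (if q < p then q else q - 1) 0 = l.getD q 0 := by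
    intro q hq hql
    have hb : (if q < p then q else q - 1) < (l.eraseIdx p).length := by
      rw [hlen]; split_ifs <;> omega
    rw [aux_getD_eraseIdx _ _ _ hb]
    have : (if (if q < p then q else q - 1) < p then (if q < p then q else q - 1)
        else (if q < p then q else q - 1) + 1) = q := by split_ifs <;> omega
    rw [this]
  refine ⟨by split_ifs <;> omega, by split_ifs <;> omega, by rw [hlen]; split_ifs <;> omega,
    ?_, ?_⟩
  · rw [key i hi (by omega), key j hj (by omega)]; exact h4
  · rw [key j hj (by omega), key k hk h3]; exact h5

lemma aux_eraseIdx_comm {α : Type*} (l : List α) : ∀ a b, a < b →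
    (l.eraseIdx b).eraseIdx a = (l.eraseIdx a).eraseIdx (b - 1) := by
  induction l with
  | nil => simp
  | cons x t ih =>
    intro a b hab
    obtain ⟨b, rfl⟩ : ∃ b', b = b' + 1 := ⟨b - 1, by omega⟩
    rw [List.eraseIdx_cons_succ, Nat.add_sub_cancel]
    cases a with
    | zero => simp
    | succ a =>
      rw [List.eraseIdx_cons_succ, List.eraseIdx_cons_succ]
      obtain ⟨b, rfl⟩ : ∃ b'', b = b'' + 1 := ⟨b - 1, by omega⟩
      rw [List.eraseIdx_cons_succ, ih a (b + 1) (by omega)]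
      simp

end Aux
section Aux2

lemma helperTop {l : List ℕ} {i j k i' j' k' : ℕ}
    (h : Tri l i j k) (h' : Tri l i' j' k') (hkk : k' ≠ k) :
    ∃ a b, Tri l a b k' ∧ a ≠ k ∧ b ≠ k := by
  obtain ⟨h1, h2, h3, h4, h5⟩ := h
  obtain ⟨h1', h2', h3', h4', h5'⟩ := h'
  by_cases e1 : j' = k
  · refine ⟨i, j, ⟨h1, by omega, h3', h4, lt_trans h5 (e1 ▸ h5')⟩, by omega, by omega⟩
  by_cases e2 : i' = k
  · exact ⟨i, j', ⟨by omega, by omega, h3', lt_trans h4 (lt_trans h5 (e2 ▸ h4')), h5'⟩,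
      by omega, by omega⟩
  · exact ⟨i', j', ⟨h1', h2', h3', h4', h5'⟩, e2, e1⟩

lemma helperMid {l : List ℕ} {i j k i' j' k' : ℕ}
    (h : Tri l i j k) (h' : Tri l i' j' k') (hjj : j' ≠ j) :
    ∃ a b, Tri l a j' b ∧ a ≠ j ∧ b ≠ j := by
  obtain ⟨h1, h2, h3, h4, h5⟩ := h
  obtain ⟨h1', h2', h3', h4', h5'⟩ := h'
  by_cases e1 : i' = j
  · exact ⟨i, k', ⟨by omega, h2', h3', lt_trans h4 (e1 ▸ h4'), h5'⟩, by omega, by omega⟩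
  by_cases e2 : k' = j
  · exact ⟨i', k, ⟨h1', by omega, h3, h4', lt_trans (e2 ▸ h5') h5⟩, by omega, by omega⟩
  · exact ⟨i', k', ⟨h1', h2', h3', h4', h5'⟩, e1, e2⟩

/-- Strong local confluence for the "delete the top of some copy of 123" relation. -/
lemma conf_top : ∀ l m m' : List ℕ, Step (fun t => t.2.2) l m → Step (fun t => t.2.2) l m' →
    ∃ e, Relation.ReflGen (Step (fun t => t.2.2)) m e ∧
      Relation.ReflTransGen (Step (fun t => t.2.2)) m' e := by
  rintro l m m' ⟨i, j, k, ht, rfl⟩ ⟨i', j', k', ht', rfl⟩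
  by_cases hkk : k' = k
  · subst hkk; exact ⟨l.eraseIdx k', .refl, .refl⟩
  · obtain ⟨a, b, hT, ha, hb⟩ := helperTop ht ht' hkk
    obtain ⟨a', b', hT', ha', hb'⟩ := helperTop ht' ht (Ne.symm hkk)
    have hk : k < l.length := ht.2.2.1
    have hk' : k' < l.length := ht'.2.2.1
    refine ⟨(l.eraseIdx k).eraseIdx (if k' < k then k' else k' - 1),
      Relation.ReflGen.single ⟨_, _, _, tri_eraseIdx hT hk ha hb hkk, rfl⟩,
      Relation.ReflTransGen.single ⟨_, _, _, tri_eraseIdx hT' hk' ha' hb' (Ne.symm hkk), ?_⟩⟩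
    show (l.eraseIdx k).eraseIdx (if k' < k then k' else k' - 1) =
      (l.eraseIdx k').eraseIdx (if k < k' then k else k - 1)
    rcases lt_or_gt_of_ne hkk with hlt | hlt
    · rw [if_pos hlt, if_neg (by omega)]
      exact aux_eraseIdx_comm l k' k hlt
    · rw [if_neg (by omega), if_pos hlt]
      exact (aux_eraseIdx_comm l k k' hlt).symm

/-- Strong local confluence for the "delete the middle of some copy of 123" relation. -/
lemma conf_mid : ∀ l m m' : List ℕ, Step (fun t => t.2.1) l m → Step (fun t => t.2.1) l m' →
    ∃ e, Relation.ReflGen (Step (fun t => t.2.1)) m e ∧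
      Relation.ReflTransGen (Step (fun t => t.2.1)) m' e := by
  rintro l m m' ⟨i, j, k, ht, rfl⟩ ⟨i', j', k', ht', rfl⟩
  by_cases hjj : j' = j
  · subst hjj; exact ⟨l.eraseIdx j', .refl, .refl⟩
  · obtain ⟨a, b, hT, ha, hb⟩ := helperMid ht ht' hjj
    obtain ⟨a', b', hT', ha', hb'⟩ := helperMid ht' ht (Ne.symm hjj)
    have hj : j < l.length := by have := ht.2.1; have := ht.2.2.1; omega
    have hj' : j' < l.length := by have := ht'.2.1; have := ht'.2.2.1; omega
    refine ⟨(l.eraseIdx j).eraseIdx (if j' < j then j' else j' - 1),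
      Relation.ReflGen.single ⟨_, _, _, tri_eraseIdx hT hj ha hjj hb, rfl⟩,
      Relation.ReflTransGen.single ⟨_, _, _, tri_eraseIdx hT' hj' ha' (Ne.symm hjj) hb', ?_⟩⟩
    show (l.eraseIdx j).eraseIdx (if j' < j then j' else j' - 1) =
      (l.eraseIdx j').eraseIdx (if j < j' then j else j - 1)
    rcases lt_or_gt_of_ne hjj with hlt | hlt
    · rw [if_pos hlt, if_neg (by omega)]
      exact aux_eraseIdx_comm l j' j hlt
    · rw [if_neg (by omega), if_pos hlt]
      exact (aux_eraseIdx_comm l j j' hlt).symm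

end Aux2
section Aux3

lemma pIter_reaches (d : ℕ × ℕ × ℕ → ℕ) (n : ℕ) :
    ∀ l, Relation.ReflTransGen (Step d) l (pIter d n l) := by
  induction n with
  | zero => intro l; exact .refl
  | succ n ih =>
    intro l
    cases h : leftmost123 l with
    | none => simp only [pIter, h]; exact .refl
    | some t =>
      have ht := leftmost123_some h
      simp only [pIter, h]
      exact Relation.ReflTransGen.head ⟨t.1, t.2.1, t.2.2, ht, rfl⟩ (ih _)

lemma pIter_normal (d : ℕ × ℕ × ℕ → ℕ) (hd : ∀ i j k : ℕ, j < k → d (i, j, k) ≤ k) :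
    ∀ n, ∀ l : List ℕ, l.length ≤ n → leftmost123 (pIter d n l) = none := by
  intro n
  induction n with
  | zero =>
    intro l hl
    have : l = [] := List.length_eq_zero_iff.mp (by omega)
    subst this
    rfl
  | succ n ih =>
    intro l hl
    cases h : leftmost123 l with
    | none => simp only [pIter, h]
    | some t =>
      have ht := leftmost123_some h
      simp only [pIter, h]
      apply ih
      have hdk : d t ≤ t.2.2 := by
        have := hd t.1 t.2.1 t.2.2 ht.2.1
        simpa using this
      have hlt : d t < l.length := lt_of_le_of_lt hdk ht.2.2.1
      rw [List.length_eraseIdx, if_pos hlt]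
      omega

lemma normal_rtg_eq {d : ℕ × ℕ × ℕ → ℕ} {l m : List ℕ} (h : leftmost123 l = none)
    (hr : Relation.ReflTransGen (Step d) l m) : m = l := by
  rcases Relation.ReflTransGen.cases_head hr with h' | ⟨c, hc, _⟩
  · exact h'.symm
  · obtain ⟨i, j, k, ht, _⟩ := hc
    exact absurd ht (leftmost123_none h i j k)

lemma step_pGamma (d : ℕ × ℕ × ℕ → ℕ) (hd : ∀ i j k : ℕ, j < k → d (i, j, k) ≤ k)
    (hc : ∀ a b c : List ℕ, Step d a b → Step d a c →
      ∃ e, Relation.ReflGen (Step d) b e ∧ Relation.ReflTransGen (Step d) c e)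
    {l m : List ℕ} (h : Step d l m) : pGamma d l = pGamma d m := by
  have h1 : Relation.ReflTransGen (Step d) l (pIter d l.length l) := pIter_reaches d _ l
  have h2 : Relation.ReflTransGen (Step d) l (pIter d m.length m) :=
    Relation.ReflTransGen.head h (pIter_reaches d _ m)
  obtain ⟨e, he1, he2⟩ := Relation.church_rosser hc h1 h2
  have n1 := pIter_normal d hd l.length l le_rfl
  have n2 := pIter_normal d hd m.length m le_rfl
  have : pIter d l.length l = pIter d m.length m :=
    (normal_rtg_eq n1 he1).symm.trans (normal_rtg_eq n2 he2)
  unfold pGamma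
  rw [this]

end Aux3
section Aux4

lemma aux_countP_range (p : ℕ → Bool) (l : List ℕ) :
    l.countP p = (List.range l.length).countP fun j => p (l.getD j 0) := by
  induction l with
  | nil => simp
  | cons a t ih =>
    rw [List.length_cons, List.range_succ_eq_map, List.countP_cons, List.countP_cons,
      List.countP_map]
    simp only [List.getD_cons_zero, List.getD_cons_succ, Function.comp_def, Nat.succ_eq_add_one]
    rw [ih]

lemma renumber_congr {u v : List ℕ} (h : OrdIso u v) : renumber u = renumber v := by
  obtain ⟨hlen, hcmp⟩ := h
  unfold renumber
  apply List.ext_getElem (by simpa using hlen)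
  intro i h1 h2
  simp only [List.getElem_map, List.length_map] at h1 h2 ⊢
  have hi : i < u.length := h1
  have hvi : i < v.length := hlen ▸ hi
  rw [← List.countP_eq_length_filter, ← List.countP_eq_length_filter,
    aux_countP_range (fun y => decide (y ≤ u[i])) u,
    aux_countP_range (fun y => decide (y ≤ v[i])) v, ← hlen]
  apply List.countP_congr
  intro j hj
  simp only [List.mem_range] at hj
  simp only [decide_eq_true_eq]
  rw [show u[i] = u.getD i 0 from (List.getD_eq_getElem u 0 hi).symm,
    show v[i] = v.getD i 0 from (List.getD_eq_getElem v 0 hvi).symm,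
    ← not_lt, ← not_lt, hcmp i j hi hj]

lemma triples123_congr {u v : List ℕ} (h : OrdIso u v) : triples123 u = triples123 v := by
  obtain ⟨hlen, hcmp⟩ := h
  unfold triples123
  rw [← hlen]
  apply List.flatMap_congr; intro i hi
  apply List.flatMap_congr; intro j hj
  apply List.filterMap_congr; intro k hk
  simp only [List.mem_range] at hi hj hk
  simp only [hcmp i j hi hj, hcmp j k hj hk]

lemma ordIso_eraseIdx {u v : List ℕ} (h : OrdIso u v) (k : ℕ) :
    OrdIso (u.eraseIdx k) (v.eraseIdx k) := by
  obtain ⟨hlen, hcmp⟩ := h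
  by_cases hk : k < u.length
  case neg =>
    rw [List.eraseIdx_of_length_le (by omega), List.eraseIdx_of_length_le (by omega)]
    exact ⟨hlen, hcmp⟩
  have hl1 : (u.eraseIdx k).length = u.length - 1 := by
    rw [List.length_eraseIdx, if_pos hk]
  have hl2 : (v.eraseIdx k).length = v.length - 1 := by
    rw [List.length_eraseIdx, if_pos (hlen ▸ hk)]
  constructor
  · omega
  · intro i j hi hj
    rw [hl1] at hi hj
    rw [aux_getD_eraseIdx u k i (by omega), aux_getD_eraseIdx u k j (by omega),
      aux_getD_eraseIdx v k i (by omega), aux_getD_eraseIdx v k j (by omega)]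
    exact hcmp _ _ (by split_ifs <;> omega) (by split_ifs <;> omega)

lemma pIter_ordIso (d : ℕ × ℕ × ℕ → ℕ) :
    ∀ n, ∀ {u v : List ℕ}, OrdIso u v → OrdIso (pIter d n u) (pIter d n v) := by
  intro n
  induction n with
  | zero => intro u v h; exact h
  | succ n ih =>
    intro u v h
    have hlm : leftmost123 u = leftmost123 v := by
      unfold leftmost123
      rw [triples123_congr h]
    cases hu : leftmost123 u with
    | none => simp only [pIter, hu, hlm ▸ hu]; exact h
    | some t => simp only [pIter, hu, hlm ▸ hu]; exact ih (ordIso_eraseIdx h _)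

lemma pGamma_ordIso (d : ℕ × ℕ × ℕ → ℕ) {u v : List ℕ} (h : OrdIso u v) :
    pGamma d u = pGamma d v := by
  unfold pGamma
  rw [h.1]
  exact renumber_congr (pIter_ordIso d v.length h)

end Aux4
section Aux5

@[simp] lemma ints_nil : ints [] = [] := rfl
@[simp] lemma ints_some (k : ℕ) (ρ : SPat) : ints (some k :: ρ) = k :: ints ρ := rfl
@[simp] lemma ints_none (ρ : SPat) : ints (none :: ρ) = ints ρ := by simp [ints]

lemma repl_nil_aux {a b ρ₁ ρ₂ : SPat} (h : Repl a b ρ₁ ρ₂) : a = [] → b = [] → ρ₁ = ρ₂ := by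
  induction h with
  | nil => intro _ _; rfl
  | keep x h ih => intro ha hb; rw [ih ha hb]
  | repl x y h ih => intro ha hb; simp at ha

lemma repl_nil {ρ₁ ρ₂ : SPat} (h : Repl [] [] ρ₁ ρ₂) : ρ₁ = ρ₂ := repl_nil_aux h rfl rfl

lemma repl_single {a b ρ₁ ρ₂ : SPat} (h : Repl a b ρ₁ ρ₂) :
    ∀ z : ℕ, a = [some z] → b = [none] →
    ∃ n, n < (ints ρ₁).length ∧ (ints ρ₁).getD n 0 = z ∧
      ints ρ₂ = (ints ρ₁).eraseIdx n := by
  induction h with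
  | nil => intro z ha hb; simp at ha
  | keep x h ih =>
    intro z ha hb
    obtain ⟨n, h1, h2, h3⟩ := ih z ha hb
    cases x with
    | none => exact ⟨n, by simpa using h1, by simpa using h2, by simpa using h3⟩
    | some w =>
      refine ⟨n + 1, by simp; omega, by simpa using h2, ?_⟩
      simp only [ints_some, ints_none, List.eraseIdx_cons_succ, List.eraseIdx_cons_zero, h3]
  | repl x y h ih =>
    intro z ha hb
    simp only [List.cons.injEq] at ha hb
    obtain ⟨rfl, rfl⟩ := ha
    obtain ⟨rfl, rfl⟩ := hb
    obtain rfl := repl_nil h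
    exact ⟨0, by simp, by simp, by simp⟩

lemma repl_pair {a b ρ₁ ρ₂ : SPat} (h : Repl a b ρ₁ ρ₂) :
    ∀ y z : ℕ, a = [some y, some z] → b = [some y, none] →
    ∃ j n, j < n ∧ n < (ints ρ₁).length ∧ (ints ρ₁).getD j 0 = y ∧
      (ints ρ₁).getD n 0 = z ∧ ints ρ₂ = (ints ρ₁).eraseIdx n := by
  induction h with
  | nil => intro y z ha hb; simp at ha
  | keep x h ih =>
    intro y z ha hb
    obtain ⟨j, n, h0, h1, h2, h2', h3⟩ := ih y z ha hb
    cases x with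
    | none =>
      exact ⟨j, n, h0, by simpa using h1, by simpa using h2, by simpa using h2',
        by simpa using h3⟩
    | some w =>
      refine ⟨j + 1, n + 1, by omega, by simp; omega, by simpa using h2,
        by simpa using h2', ?_⟩
      simp only [ints_some, ints_none, List.eraseIdx_cons_succ, List.eraseIdx_cons_zero, h3]
  | repl x y' h ih =>
    intro y z ha hb
    simp only [List.cons.injEq] at ha hb
    obtain ⟨rfl, ha⟩ := ha
    obtain ⟨rfl, hb⟩ := hb
    obtain ⟨n, h1, h2, h3⟩ := repl_single h z ha hb
    refine ⟨0, n + 1, by omega, by simp; omega, by simp, by simpa using h2, ?_⟩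
    simp only [ints_some, ints_none, List.eraseIdx_cons_succ, List.eraseIdx_cons_zero, h3]

lemma repl_triple {a b ρ₁ ρ₂ : SPat} (h : Repl a b ρ₁ ρ₂) :
    ∀ x y z : ℕ, a = [some x, some y, some z] → b = [some x, some y, none] →
    ∃ i j n, i < j ∧ j < n ∧ n < (ints ρ₁).length ∧ (ints ρ₁).getD i 0 = x ∧
      (ints ρ₁).getD j 0 = y ∧ (ints ρ₁).getD n 0 = z ∧
      ints ρ₂ = (ints ρ₁).eraseIdx n := by
  induction h with
  | nil => intro x y z ha hb; simp at ha
  | keep w h ih =>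
    intro x y z ha hb
    obtain ⟨i, j, n, h0, h0', h1, h2, h2', h2'', h3⟩ := ih x y z ha hb
    cases w with
    | none =>
      exact ⟨i, j, n, h0, h0', by simpa using h1, by simpa using h2, by simpa using h2',
        by simpa using h2'', by simpa using h3⟩
    | some w =>
      refine ⟨i + 1, j + 1, n + 1, by omega, by omega, by simp; omega, by simpa using h2,
        by simpa using h2', by simpa using h2'', ?_⟩
      simp only [ints_some, ints_none, List.eraseIdx_cons_succ, List.eraseIdx_cons_zero, h3]
  | repl w y' h ih =>
    intro x y z ha hb
    simp only [List.cons.injEq] at ha hb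
    obtain ⟨rfl, ha⟩ := ha
    obtain ⟨rfl, hb⟩ := hb
    obtain ⟨j, n, h0, h1, h2, h2', h3⟩ := repl_pair h y z ha hb
    refine ⟨0, j + 1, n + 1, by omega, by omega, by simp; omega, by simp,
      by simpa using h2, by simpa using h2', ?_⟩
    simp only [ints_some, ints_none, List.eraseIdx_cons_succ, List.eraseIdx_cons_zero, h3]

lemma repl_same {a b ρ₁ ρ₂ : SPat} (h : Repl a b ρ₁ ρ₂) :
    ∀ z : ℕ, a = [some z] → b = [some z] →
    ∃ n, n < (ints ρ₁).length ∧ (ints ρ₁).getD n 0 = z ∧ ints ρ₂ = ints ρ₁ := by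
  induction h with
  | nil => intro z ha hb; simp at ha
  | keep x h ih =>
    intro z ha hb
    obtain ⟨n, h1, h2, h3⟩ := ih z ha hb
    cases x with
    | none => exact ⟨n, by simpa using h1, by simpa using h2, by simpa using h3⟩
    | some w =>
      exact ⟨n + 1, by simp; omega, by simpa using h2, by rw [ints_some, ints_some, h3]⟩
  | repl x y h ih =>
    intro z ha hb
    simp only [List.cons.injEq] at ha hb
    obtain ⟨rfl, rfl⟩ := ha
    obtain ⟨rfl, rfl⟩ := hb
    obtain rfl := repl_nil h
    exact ⟨0, by simp, by simp, by simp⟩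

lemma repl_mid2 {a b ρ₁ ρ₂ : SPat} (h : Repl a b ρ₁ ρ₂) :
    ∀ y z : ℕ, a = [some y, some z] → b = [none, some z] →
    ∃ j n, j < n ∧ n < (ints ρ₁).length ∧ (ints ρ₁).getD j 0 = y ∧
      (ints ρ₁).getD n 0 = z ∧ ints ρ₂ = (ints ρ₁).eraseIdx j := by
  induction h with
  | nil => intro y z ha hb; simp at ha
  | keep x h ih =>
    intro y z ha hb
    obtain ⟨j, n, h0, h1, h2, h2', h3⟩ := ih y z ha hb
    cases x with
    | none =>
      exact ⟨j, n, h0, by simpa using h1, by simpa using h2, by simpa using h2',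
        by simpa using h3⟩
    | some w =>
      refine ⟨j + 1, n + 1, by omega, by simp; omega, by simpa using h2,
        by simpa using h2', ?_⟩
      simp only [ints_some, ints_none, List.eraseIdx_cons_succ, List.eraseIdx_cons_zero, h3]
  | repl x y' h ih =>
    intro y z ha hb
    simp only [List.cons.injEq] at ha hb
    obtain ⟨rfl, ha⟩ := ha
    obtain ⟨rfl, hb⟩ := hb
    obtain ⟨n, h1, h2, h3⟩ := repl_same h z ha hb
    refine ⟨0, n + 1, by omega, by simp; omega, by simp, by simpa using h2, ?_⟩
    simp only [ints_some, ints_none, List.eraseIdx_cons_succ, List.eraseIdx_cons_zero, h3]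

lemma repl_mid3 {a b ρ₁ ρ₂ : SPat} (h : Repl a b ρ₁ ρ₂) :
    ∀ x y z : ℕ, a = [some x, some y, some z] → b = [some x, none, some z] →
    ∃ i j n, i < j ∧ j < n ∧ n < (ints ρ₁).length ∧ (ints ρ₁).getD i 0 = x ∧
      (ints ρ₁).getD j 0 = y ∧ (ints ρ₁).getD n 0 = z ∧
      ints ρ₂ = (ints ρ₁).eraseIdx j := by
  induction h with
  | nil => intro x y z ha hb; simp at ha
  | keep w h ih =>
    intro x y z ha hb
    obtain ⟨i, j, n, h0, h0', h1, h2, h2', h2'', h3⟩ := ih x y z ha hb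
    cases w with
    | none =>
      exact ⟨i, j, n, h0, h0', by simpa using h1, by simpa using h2, by simpa using h2',
        by simpa using h2'', by simpa using h3⟩
    | some w =>
      refine ⟨i + 1, j + 1, n + 1, by omega, by omega, by simp; omega, by simpa using h2,
        by simpa using h2', by simpa using h2'', ?_⟩
      simp only [ints_some, ints_none, List.eraseIdx_cons_succ, List.eraseIdx_cons_zero, h3]
  | repl w y' h ih =>
    intro x y z ha hb
    simp only [List.cons.injEq] at ha hb
    obtain ⟨rfl, ha⟩ := ha
    obtain ⟨rfl, hb⟩ := hb
    obtain ⟨j, n, h0, h1, h2, h2', h3⟩ := repl_mid2 h y z ha hb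
    refine ⟨0, j + 1, n + 1, by omega, by omega, by simp; omega, by simp,
      by simpa using h2, by simpa using h2', ?_⟩
    simp only [ints_some, ints_none, List.eraseIdx_cons_succ, List.eraseIdx_cons_zero, h3]

end Aux5
section Aux6

lemma copy123 {a : SPat} (h : IsCopy a pat123) :
    ∃ x y z : ℕ, x < y ∧ y < z ∧ a = [some x, some y, some z] := by
  obtain ⟨hlen, hstar, hiso⟩ := h
  obtain ⟨o1, o2, o3, rfl⟩ := List.length_eq_three.mp (by simpa [pat123] using hlen)
  have h0 := hstar 0
  have h1 := hstar 1
  have h2 := hstar 2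
  simp only [pat123, List.getD_cons_zero, List.getD_cons_succ] at h0 h1 h2
  obtain ⟨x, rfl⟩ : ∃ x, o1 = some x := Option.ne_none_iff_exists'.mp (by simp_all)
  obtain ⟨y, rfl⟩ : ∃ y, o2 = some y := Option.ne_none_iff_exists'.mp (by simp_all)
  obtain ⟨z, rfl⟩ : ∃ z, o3 = some z := Option.ne_none_iff_exists'.mp (by simp_all)
  refine ⟨x, y, z, ?_, ?_, rfl⟩
  · have := (hiso.2 0 1 (by simp [ints]) (by simp [ints])).mpr (by decide)
    simpa [ints] using this
  · have := (hiso.2 1 2 (by simp [ints]) (by simp [ints])).mpr (by decide)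
    simpa [ints] using this

lemma copy12S {b : SPat} (h : IsCopy b pat12S) :
    ∃ u v : ℕ, b = [some u, some v, none] := by
  obtain ⟨hlen, hstar, _⟩ := h
  obtain ⟨o1, o2, o3, rfl⟩ := List.length_eq_three.mp (by simpa [pat12S] using hlen)
  have h0 := hstar 0
  have h1 := hstar 1
  have h2 := hstar 2
  simp only [pat12S, List.getD_cons_zero, List.getD_cons_succ] at h0 h1 h2
  obtain ⟨u, rfl⟩ : ∃ u, o1 = some u := Option.ne_none_iff_exists'.mp (by simp_all)
  obtain ⟨v, rfl⟩ : ∃ v, o2 = some v := Option.ne_none_iff_exists'.mp (by simp_all)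
  obtain rfl : o3 = none := by simp_all
  exact ⟨u, v, rfl⟩

lemma copy1S3 {b : SPat} (h : IsCopy b pat1S3) :
    ∃ u w : ℕ, b = [some u, none, some w] := by
  obtain ⟨hlen, hstar, _⟩ := h
  obtain ⟨o1, o2, o3, rfl⟩ := List.length_eq_three.mp (by simpa [pat1S3] using hlen)
  have h0 := hstar 0
  have h1 := hstar 1
  have h2 := hstar 2
  simp only [pat1S3, List.getD_cons_zero, List.getD_cons_succ] at h0 h1 h2
  obtain ⟨u, rfl⟩ : ∃ u, o1 = some u := Option.ne_none_iff_exists'.mp (by simp_all)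
  obtain rfl : o2 = none := by simp_all
  obtain ⟨w, rfl⟩ : ∃ w, o3 = some w := Option.ne_none_iff_exists'.mp (by simp_all)
  exact ⟨u, w, rfl⟩

lemma ordIso_symm {u v : List ℕ} (h : OrdIso u v) : OrdIso v u := by
  obtain ⟨hlen, hcmp⟩ := h
  exact ⟨hlen.symm, fun i j hi hj => (hcmp i j (hlen ▸ hi) (hlen ▸ hj)).symm⟩

end Aux6


/-- for `γ ∈ {12★, 1★3}`, if `σ` is a result of the replacement
`123 → γ` on `π`, then `p_γ(π) = p_γ(σ)`. -/
theorem pGamma_singleStep :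
    (∀ π σ : List ℕ, IsPermList π → IsResult pat123 pat12S π σ →
      p12star π = p12star σ) ∧
    (∀ π σ : List ℕ, IsPermList π → IsResult pat123 pat1S3 π σ →
      p1star3 π = p1star3 σ) := by

  constructor
  · intro π σ _ h
    obtain ⟨ρ₁, ρ₂, a, b, _, hπ, hca, _, hcb, _, hcommon, hrepl, _, hσ⟩ := h
    obtain ⟨x, y, z, hxy, hyz, rfl⟩ := copy123 hca
    obtain ⟨u, v, rfl⟩ := copy12S hcb
    have e0 : (some x : Option ℕ) = some u := hcommon 0 0 1 rfl rfl
    have e1 : (some y : Option ℕ) = some v := hcommon 1 1 2 rfl rfl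
    obtain rfl : u = x := by injection e0 with e; exact e.symm
    obtain rfl : v = y := by injection e1 with e; exact e.symm
    obtain ⟨i, j, n, hij, hjn, hn, hgi, hgj, hgn, herase⟩ :=
      repl_triple hrepl u v z rfl rfl
    have hstep : Step (fun t => t.2.2) (ints ρ₁) (ints ρ₂) :=
      ⟨i, j, n, ⟨hij, hjn, hn, by rw [hgi, hgj]; exact hxy, by rw [hgj, hgn]; exact hyz⟩,
        herase⟩
    have hmain : pGamma (fun t => t.2.2) (ints ρ₁) = pGamma (fun t => t.2.2) (ints ρ₂) :=
      step_pGamma _ (fun i j k _ => le_rfl) conf_top hstep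
    calc p12star π = pGamma (fun t => t.2.2) (ints ρ₁) := pGamma_ordIso _ hπ
      _ = pGamma (fun t => t.2.2) (ints ρ₂) := hmain
      _ = p12star σ := pGamma_ordIso _ hσ
  · intro π σ _ h
    obtain ⟨ρ₁, ρ₂, a, b, _, hπ, hca, _, hcb, _, hcommon, hrepl, _, hσ⟩ := h
    obtain ⟨x, y, z, hxy, hyz, rfl⟩ := copy123 hca
    obtain ⟨u, w, rfl⟩ := copy1S3 hcb
    have e0 : (some x : Option ℕ) = some u := hcommon 0 0 1 rfl rfl
    have e1 : (some z : Option ℕ) = some w := hcommon 2 2 3 rfl rfl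
    obtain rfl : u = x := by injection e0 with e; exact e.symm
    obtain rfl : w = z := by injection e1 with e; exact e.symm
    obtain ⟨i, j, n, hij, hjn, hn, hgi, hgj, hgn, herase⟩ :=
      repl_mid3 hrepl u y w rfl rfl
    have hstep : Step (fun t => t.2.1) (ints ρ₁) (ints ρ₂) :=
      ⟨i, j, n, ⟨hij, hjn, hn, by rw [hgi, hgj]; exact hxy, by rw [hgj, hgn]; exact hyz⟩,
        herase⟩
    have hmain : pGamma (fun t => t.2.1) (ints ρ₁) = pGamma (fun t => t.2.1) (ints ρ₂) :=
      step_pGamma _ (fun i j k hjk => le_of_lt hjk) conf_mid hstep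
    calc p1star3 π = pGamma (fun t => t.2.1) (ints ρ₁) := pGamma_ordIso _ hπ
      _ = pGamma (fun t => t.2.1) (ints ρ₂) := hmain
      _ = p1star3 σ := pGamma_ordIso _ hσ
end

section
/- For γ ∈ {12★, 1★3} and any permutation π, p_γ(π) is the primitive permutation of π under 123 ↔ γ: p_γ(π) ≡ π, and every permutation σ with σ ≡ π satisfies |σ| ≥ |p_γ(π)|, with equality only if σ = p_γ(π). -/
/-! ### Auxiliary development -/

open Classical in
noncomputable instance (p : Prop) : Decidable p := Classical.propDecidable p

namespace PG

/-- counting helper -/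
lemma filter_length_mono {α : Type*} {p q : α → Bool} (L : List α)
    (h : ∀ a ∈ L, p a → q a) : (L.filter p).length ≤ (L.filter q).length := by
  induction L with
  | nil => simp
  | cons x L ih =>
    have h' : ∀ a ∈ L, p a → q a := fun a ha => h a (List.mem_cons_of_mem _ ha)
    by_cases hp : p x
    · have hq : q x := h x (List.mem_cons_self) hp
      simp [List.filter_cons, hp, hq]; exact ih h'
    · simp only [List.filter_cons, hp, if_neg, Bool.false_eq_true, not_false_iff]
      by_cases hq : q x
      · simp [hq]; exact Nat.le_succ_of_le (ih h')
      · simp [hq]; exact ih h'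

lemma filter_length_lt {α : Type*} {p q : α → Bool} (L : List α)
    (h : ∀ a ∈ L, p a → q a) (a0 : α) (ha : a0 ∈ L) (hq : q a0) (hp : ¬ p a0 = true) :
    (L.filter p).length < (L.filter q).length := by
  induction L with
  | nil => simp at ha
  | cons x L ih =>
    have h' : ∀ a ∈ L, p a → q a := fun a hb => h a (List.mem_cons_of_mem _ hb)
    rcases List.mem_cons.1 ha with rfl | ha'
    · simp only [List.filter_cons, hp, if_neg, Bool.false_eq_true, not_false_iff, hq, if_pos]
      simp only [List.length_cons]
      exact Nat.lt_succ_of_le (filter_length_mono L h')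
    · by_cases hpx : p x
      · have hqx : q x := h x (List.mem_cons_self) hpx
        simp [List.filter_cons, hpx, hqx]
        exact ih h' ha'
      · simp only [List.filter_cons, hpx, if_neg, Bool.false_eq_true, not_false_iff]
        by_cases hqx : q x
        · simp [hqx]
          exact Nat.le_of_lt (ih h' ha')
        · simp [hqx]; exact ih h' ha'

lemma map_getD_range (l : List ℕ) : (List.range l.length).map (fun i => l.getD i 0) = l := by
  apply List.ext_getElem
  · simp
  · intro i h1 h2
    simp only [List.getElem_map, List.getElem_range]
    rw [List.getD_eq_getElem]

/-- index-based strict count -/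
def cnt (l : List ℕ) (x : ℕ) : ℕ :=
  ((List.range l.length).filter (fun j => decide (l.getD j 0 < x))).length

lemma cnt_eq_filter (l : List ℕ) (x : ℕ) :
    cnt l x = (l.filter (fun y => decide (y < x))).length := by
  unfold cnt
  conv_rhs => rw [← map_getD_range l]
  rw [List.filter_map, List.length_map]
  rfl

lemma length_filter_le_succ_cnt (l : List ℕ) (x : ℕ) (hx : x ∈ l) (hl : l.Nodup) :
    (l.filter (fun y => decide (y ≤ x))).length = cnt l x + 1 := by
  rw [cnt_eq_filter]
  induction l with
  | nil => simp at hx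
  | cons a l ih =>
    rcases List.mem_cons.1 hx with rfl | hx'
    · have hnx : x ∉ l := (List.nodup_cons.1 hl).1
      have : (l.filter (fun y => decide (y ≤ x))) = (l.filter (fun y => decide (y < x))) := by
        apply List.filter_congr
        intro b hb
        have : b ≠ x := fun h => hnx (h ▸ hb)
        simp only [decide_eq_decide]
        omega
      simp [List.filter_cons, this]
    · have hne : a ≠ x := fun h => (List.nodup_cons.1 hl).1 (h ▸ hx')
      have ih' := ih hx' (List.nodup_cons.1 hl).2
      by_cases hax : a ≤ x
      · have hax' : a < x := lt_of_le_of_ne hax hne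
        simp [List.filter_cons, hax, hax', ih']
      · have hax' : ¬ a < x := fun h => hax h.le
        simp [List.filter_cons, hax, hax', ih']

lemma renumber_length (l : List ℕ) : (renumber l).length = l.length := by
  simp [renumber]

lemma renumber_getD (l : List ℕ) (i : ℕ) (hi : i < l.length) :
    (renumber l).getD i 0 = (l.filter (fun y => y ≤ l.getD i 0)).length := by
  rw [List.getD_eq_getElem _ _ (by simpa [renumber] using hi)]
  simp only [renumber, List.getElem_map]
  rw [List.getD_eq_getElem _ _ hi]

/-- closed form for renumber entries -/
lemma renumber_getD' (l : List ℕ) (hl : l.Nodup) (i : ℕ) (hi : i < l.length) :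
    (renumber l).getD i 0 = cnt l (l.getD i 0) + 1 := by
  rw [renumber_getD l i hi]
  have hx : l.getD i 0 ∈ l := by
    rw [List.getD_eq_getElem _ _ hi]; exact List.getElem_mem _
  have := length_filter_le_succ_cnt l (l.getD i 0) hx hl
  simpa using this

lemma cnt_lt_cnt (l : List ℕ) {i j : ℕ} (hi : i < l.length) (hj : j < l.length)
    (hij : l.getD i 0 < l.getD j 0) : cnt l (l.getD i 0) < cnt l (l.getD j 0) := by
  apply filter_length_lt
  · intro a _ ha
    simp only [decide_eq_true_eq] at *
    omega
  · exact List.mem_range.2 hi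
  · simp only [decide_eq_true_eq]; exact hij
  · simp

lemma cnt_lt_iff (l : List ℕ) (hl : l.Nodup) {i j : ℕ} (hi : i < l.length) (hj : j < l.length) :
    cnt l (l.getD i 0) < cnt l (l.getD j 0) ↔ l.getD i 0 < l.getD j 0 := by
  constructor
  · intro h
    by_contra hc
    push_neg at hc
    rcases lt_or_eq_of_le hc with h' | h'
    · exact absurd (cnt_lt_cnt l hj hi h') (by omega)
    · rw [h'] at h; omega
  · exact cnt_lt_cnt l hi hj

lemma ordIso_renumber (l : List ℕ) (hl : l.Nodup) : OrdIso l (renumber l) := by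
  refine ⟨(renumber_length l).symm, fun i j hi hj => ?_⟩
  rw [renumber_getD' l hl i hi, renumber_getD' l hl j hj]
  rw [← cnt_lt_iff l hl hi hj]
  omega

lemma ordIso_refl (l : List ℕ) : OrdIso l l := ⟨rfl, fun _ _ _ _ => Iff.rfl⟩

lemma ordIso_symm {u v : List ℕ} (h : OrdIso u v) : OrdIso v u := by
  obtain ⟨hlen, h⟩ := h
  exact ⟨hlen.symm, fun i j hi hj => (h i j (hlen ▸ hi) (hlen ▸ hj)).symm⟩

lemma ordIso_trans {u v w : List ℕ} (h1 : OrdIso u v) (h2 : OrdIso v w) : OrdIso u w := by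
  obtain ⟨l1, h1⟩ := h1
  obtain ⟨l2, h2⟩ := h2
  exact ⟨l1.trans l2, fun i j hi hj =>
    (h1 i j hi hj).trans (h2 i j (l1 ▸ hi) (l1 ▸ hj))⟩

lemma nodup_iff_getD {l : List ℕ} :
    l.Nodup ↔ ∀ i j, i < j → j < l.length → l.getD i 0 ≠ l.getD j 0 := by
  rw [List.nodup_iff_injective_getElem]
  constructor
  · intro h i j hij hj hne
    have hi : i < l.length := hij.trans hj
    rw [List.getD_eq_getElem _ _ hi, List.getD_eq_getElem _ _ hj] at hne
    have : (⟨i, hi⟩ : Fin l.length) = ⟨j, hj⟩ := h (a₁ := ⟨i, hi⟩) (a₂ := ⟨j, hj⟩) hne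
    simp only [Fin.mk.injEq] at this
    omega
  · rintro h ⟨i, hi⟩ ⟨j, hj⟩ hij
    simp only at hij
    rcases Nat.lt_trichotomy i j with hlt | heq | hgt
    · exact absurd (by rw [List.getD_eq_getElem _ _ hi, List.getD_eq_getElem _ _ hj]; exact hij)
        (h i j hlt hj)
    · exact Fin.ext heq
    · exact absurd (by rw [List.getD_eq_getElem _ _ hi, List.getD_eq_getElem _ _ hj]; exact hij.symm)
        (h j i hgt hi)

lemma ordIso_nodup {u v : List ℕ} (h : OrdIso u v) (hu : u.Nodup) : v.Nodup := by
  obtain ⟨hlen, h⟩ := h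
  rw [nodup_iff_getD] at hu ⊢
  intro i j hij hj hne
  have hi : i < v.length := hij.trans hj
  have hi' : i < u.length := hlen ▸ hi
  have hj' : j < u.length := hlen ▸ hj
  have h1 := h i j hi' hj'
  have h2 := h j i hj' hi'
  rw [hne] at h1 h2
  simp only [lt_self_iff_false, iff_false] at h1 h2
  exact hu i j hij hj' (by omega)

lemma renumber_eq_of_ordIso {u v : List ℕ} (hu : u.Nodup) (h : OrdIso u v) :
    renumber u = renumber v := by
  have hv : v.Nodup := ordIso_nodup h hu
  obtain ⟨hlen, hcmp⟩ := h
  apply List.ext_getElem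
  · simp [renumber_length, hlen]
  · intro i h1 h2
    rw [← List.getD_eq_getElem _ 0 h1, ← List.getD_eq_getElem _ 0 h2]
    have hi : i < u.length := by simpa [renumber_length] using h1
    have hi' : i < v.length := hlen ▸ hi
    rw [renumber_getD' u hu i hi, renumber_getD' v hv i hi']
    congr 1
    unfold cnt
    rw [← hlen]
    apply congrArg
    apply List.filter_congr
    intro j hj
    have hj' : j < u.length := List.mem_range.1 hj
    simp only [decide_eq_decide]
    exact hcmp j i hj' hi

lemma renumber_nodup (l : List ℕ) (hl : l.Nodup) : (renumber l).Nodup :=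
  ordIso_nodup (ordIso_renumber l hl) hl

lemma renumber_mem_range' (l : List ℕ) {x : ℕ} (hx : x ∈ renumber l) :
    x ∈ List.range' 1 l.length := by
  simp only [renumber, List.mem_map] at hx
  obtain ⟨y, hy, rfl⟩ := hx
  rw [List.mem_range'_1]
  constructor
  · have hm : y ∈ l.filter (fun z => z ≤ y) := List.mem_filter.2 ⟨hy, by simp⟩
    have := List.length_pos_iff.2 (List.ne_nil_of_mem hm)
    omega
  · have := List.length_filter_le (fun z => decide (z ≤ y)) l
    omega

lemma renumber_pos (l : List ℕ) {x : ℕ} (hx : x ∈ renumber l) : 0 < x := by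
  have := renumber_mem_range' l hx
  rw [List.mem_range'_1] at this
  omega

lemma isPermList_renumber (l : List ℕ) (hl : l.Nodup) : IsPermList (renumber l) := by
  unfold IsPermList
  rw [renumber_length]
  have hsub : (renumber l).Subperm (List.range' 1 l.length) :=
    List.subperm_of_subset (renumber_nodup l hl) (fun x hx => renumber_mem_range' l hx)
  exact hsub.perm_of_length_le (by simp [renumber_length])

lemma isPermList_nodup {π : List ℕ} (h : IsPermList π) : π.Nodup :=
  h.nodup_iff.2 (List.nodup_range')

lemma isPermList_pos {π : List ℕ} (h : IsPermList π) {x : ℕ} (hx : x ∈ π) : 0 < x := by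
  have := h.subset hx
  rw [List.mem_range'_1] at this
  omega

lemma filter_le_range' (n v : ℕ) (hv : v ≤ n) :
    ((List.range' 1 n).filter (fun y => y ≤ v)).length = v := by
  induction n with
  | zero => interval_cases v; simp
  | succ n ih =>
    rw [List.range'_concat, List.filter_append]
    by_cases h : v ≤ n
    · have : ¬ (1 + 1 * n ≤ v) := by omega
      simp only [List.filter_cons, List.filter_nil, this, decide_eq_true_eq, if_neg,
        not_false_iff]
      simp only [List.length_append, List.length_nil]
      rw [ih h]; omega
    · have hv' : v = n + 1 := by omega
      have h1 : (List.range' 1 n).filter (fun y => decide (y ≤ v)) = List.range' 1 n := by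
        apply List.filter_eq_self.2
        intro a ha
        rw [List.mem_range'_1] at ha
        simp only [decide_eq_true_eq]; omega
      have h2 : 1 + 1 * n ≤ v := by omega
      simp only [List.filter_cons, List.filter_nil, h2, decide_eq_true_eq, if_pos]
      rw [h1]
      simp [hv']

lemma renumber_eq_self {π : List ℕ} (h : IsPermList π) : renumber π = π := by
  unfold renumber
  conv_rhs => rw [← List.map_id π]
  apply List.map_congr_left
  intro x hx
  have hperm : π.Perm (List.range' 1 π.length) := h
  have heq : (π.filter (fun y => y ≤ x)).length
      = ((List.range' 1 π.length).filter (fun y => y ≤ x)).length :=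
    (hperm.filter _).length_eq
  have hmem := hperm.subset hx
  rw [List.mem_range'_1] at hmem
  rw [heq, filter_le_range' _ _ (by omega)]
  rfl

lemma gd_append_lt {α : Type*} (u v : List α) (d : α) (i : ℕ) (h : i < u.length) :
    (u ++ v).getD i d = u.getD i d := by
  rw [List.getD_eq_getElem _ _ (by rw [List.length_append]; omega),
    List.getD_eq_getElem _ _ h, List.getElem_append_left h]

lemma gd_append_ge {α : Type*} (u v : List α) (d : α) (i : ℕ) (h : u.length ≤ i) :
    (u ++ v).getD i d = v.getD (i - u.length) d := by
  rw [List.getD_eq_getElem?_getD, List.getD_eq_getElem?_getD, List.getElem?_append_right h]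

lemma eraseIdx_split {α : Type*} (P D : List α) (x : α) :
    (P ++ x :: D).eraseIdx P.length = P ++ D := by
  induction P with
  | nil => simp [List.eraseIdx]
  | cons a P ih => simp [List.eraseIdx, ih]

lemma gd_eraseIdx (l : List ℕ) (k i : ℕ) (hi : i < (l.eraseIdx k).length) :
    (l.eraseIdx k).getD i 0 = if i < k then l.getD i 0 else l.getD (i + 1) 0 := by
  rw [List.length_eraseIdx] at hi
  have hk : (i < k → i < l.length) ∧ (¬ i < k → i + 1 < l.length) := by
    constructor <;> intro <;> split at hi <;> omega
  rw [List.getD_eq_getElem _ _ (by rw [List.length_eraseIdx]; split at hi <;> split <;> omega),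
    List.getElem_eraseIdx]
  split
  · rw [List.getD_eq_getElem _ _ (hk.1 (by assumption))]
  · rw [List.getD_eq_getElem _ _ (hk.2 (by assumption))]

lemma ordIso_eraseIdx {u v : List ℕ} (h : OrdIso u v) (k : ℕ) :
    OrdIso (u.eraseIdx k) (v.eraseIdx k) := by
  obtain ⟨hlen, hcmp⟩ := h
  have hl : (u.eraseIdx k).length = (v.eraseIdx k).length := by
    rw [List.length_eraseIdx, List.length_eraseIdx, hlen]
  refine ⟨hl, fun i j hi hj => ?_⟩
  have hiu : i < u.length := by rw [List.length_eraseIdx] at hi; split at hi <;> omega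
  have hju : j < u.length := by rw [List.length_eraseIdx] at hj; split at hj <;> omega
  have hi1 : ¬ i < k → i + 1 < u.length := by
    intro h'; rw [List.length_eraseIdx] at hi; split at hi <;> omega
  have hj1 : ¬ j < k → j + 1 < u.length := by
    intro h'; rw [List.length_eraseIdx] at hj; split at hj <;> omega
  rw [gd_eraseIdx u k i hi, gd_eraseIdx u k j hj,
    gd_eraseIdx v k i (hl ▸ hi), gd_eraseIdx v k j (hl ▸ hj)]
  split <;> split
  · exact hcmp i j hiu hju
  · exact hcmp i (j+1) hiu (hj1 (by assumption))
  · exact hcmp (i+1) j (hi1 (by assumption)) hju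
  · exact hcmp (i+1) (j+1) (hi1 (by assumption)) (hj1 (by assumption))

/-! ### The kept-position invariant -/

def bad12 (l : List ℕ) (k : ℕ) : Prop :=
  ∃ i j, i < j ∧ j < k ∧ l.getD i 0 < l.getD j 0 ∧ l.getD j 0 < l.getD k 0

def bad13 (l : List ℕ) (k : ℕ) : Prop :=
  (∃ i, i < k ∧ l.getD i 0 < l.getD k 0) ∧
  (∃ j, k < j ∧ j < l.length ∧ l.getD k 0 < l.getD j 0)

noncomputable def keepP (bad : List ℕ → ℕ → Prop) (l : List ℕ) : List ℕ :=
  ((List.range l.length).filter (fun i => decide (¬ bad l i))).map (fun i => l.getD i 0)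

lemma keepP_sublist (bad : List ℕ → ℕ → Prop) (l : List ℕ) : (keepP bad l).Sublist l := by
  have h1 : ((List.range l.length).filter (fun i => decide (¬ bad l i))).Sublist
      (List.range l.length) := List.filter_sublist
  have := h1.map (fun i => l.getD i 0)
  rw [map_getD_range l] at this
  exact this

lemma keepP_length_le (bad : List ℕ → ℕ → Prop) (l : List ℕ) :
    (keepP bad l).length ≤ l.length := (keepP_sublist bad l).length_le

lemma keepP_of_no_bad {bad : List ℕ → ℕ → Prop} {l : List ℕ}
    (h : ∀ i, i < l.length → ¬ bad l i) : keepP bad l = l := by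
  unfold keepP
  rw [List.filter_eq_self.2, map_getD_range l]
  intro a ha
  simp only [decide_eq_true_eq]
  exact h a (List.mem_range.1 ha)

/-- getD of a map, in range -/
lemma gd_map {α : Type*} (g : ℕ → α) (d : α) (is : List ℕ) (m : ℕ) (hm : m < is.length) :
    (is.map g).getD m d = g (is.getD m 0) := by
  rw [List.getD_eq_getElem _ _ (by rw [List.length_map]; exact hm), List.getElem_map,
    List.getD_eq_getElem _ _ hm]

lemma gd_mem (is : List ℕ) (m : ℕ) (hm : m < is.length) : is.getD m 0 ∈ is := by
  rw [List.getD_eq_getElem _ _ hm]; exact List.getElem_mem _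

/-- pattern-invariance of `keepP` -/
lemma ordIso_keepP {bad : List ℕ → ℕ → Prop} {l l' : List ℕ} (h : OrdIso l l')
    (hb : ∀ i, i < l.length → (bad l i ↔ bad l' i)) :
    OrdIso (keepP bad l) (keepP bad l') := by
  obtain ⟨hlen, hcmp⟩ := h
  have hfil : (List.range l.length).filter (fun i => decide (¬ bad l i))
      = (List.range l'.length).filter (fun i => decide (¬ bad l' i)) := by
    rw [← hlen]
    apply List.filter_congr
    intro a ha
    simp only [decide_eq_decide]
    rw [hb a (List.mem_range.1 ha)]
  set is := (List.range l.length).filter (fun i => decide (¬ bad l i)) with his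
  have hmem : ∀ a ∈ is, a < l.length := by
    intro a ha
    exact List.mem_range.1 (List.mem_of_mem_filter ha)
  have hkeep : keepP bad l = is.map (fun i => l.getD i 0) := by rw [keepP, ← his]
  have hkeep' : keepP bad l' = is.map (fun i => l'.getD i 0) := by rw [keepP, ← hfil]
  refine ⟨by rw [hkeep, hkeep', List.length_map, List.length_map], fun i j hi hj => ?_⟩
  rw [hkeep, List.length_map] at hi hj
  rw [hkeep, hkeep', gd_map _ _ _ _ hi, gd_map _ _ _ _ hj, gd_map _ _ _ _ hi,
    gd_map _ _ _ _ hj]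
  exact hcmp _ _ (hmem _ (gd_mem _ _ hi)) (hmem _ (gd_mem _ _ hj))

/-- moving an index across an erased position -/
lemma gd_eraseIdx_of_ne (l : List ℕ) (k x : ℕ) (hx : x < l.length) (hk : k < l.length)
    (hxk : x ≠ k) :
    (l.eraseIdx k).getD (if x < k then x else x - 1) 0 = l.getD x 0 := by
  have hlen : (l.eraseIdx k).length = l.length - 1 := by
    rw [List.length_eraseIdx, if_pos hk]
  by_cases h : x < k
  · rw [if_pos h, gd_eraseIdx l k x (by omega), if_pos h]
  · rw [if_neg h, gd_eraseIdx l k (x-1) (by omega), if_neg (by omega)]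
    congr 1
    omega

lemma bad12_good_pair (l : List ℕ) (p : ℕ) (h : bad12 l p) :
    ∃ a b, a < b ∧ b < p ∧ l.getD a 0 < l.getD b 0 ∧ l.getD b 0 < l.getD p 0 ∧
      ¬ bad12 l a ∧ ¬ bad12 l b := by
  induction p using Nat.strong_induction_on with
  | _ p ih =>
    obtain ⟨i, j, hij, hjp, h1, h2⟩ := h
    by_cases hbj : bad12 l j
    · obtain ⟨a, b, hab, hbj', va, vb, ga, gb⟩ := ih j hjp hbj
      exact ⟨a, b, hab, hbj'.trans hjp, va, vb.trans h2, ga, gb⟩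
    · by_cases hbi : bad12 l i
      · obtain ⟨a, b, hab, hbi', va, vb, ga, gb⟩ := ih i (hij.trans hjp) hbi
        exact ⟨b, j, hbi'.trans hij, hjp, vb.trans h1, h2, gb, hbj⟩
      · exact ⟨i, j, hij, hjp, h1, h2, hbi, hbj⟩

lemma bad12_erase_iff (l : List ℕ) (k : ℕ) (hk : k < l.length) (hbk : bad12 l k)
    (i : ℕ) (hi : i < l.length - 1) :
    bad12 (l.eraseIdx k) i ↔ bad12 l (if i < k then i else i + 1) := by
  have hgd : ∀ x, x < l.length - 1 →
      (l.eraseIdx k).getD x 0 = l.getD (if x < k then x else x + 1) 0 := by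
    intro x hx
    rw [gd_eraseIdx l k x (by rw [List.length_eraseIdx, if_pos hk]; omega)]
    rcases Nat.lt_or_ge x k with h | h
    · rw [if_pos h, if_pos h]
    · rw [if_neg (by omega), if_neg (by omega)]
  constructor
  · rintro ⟨a, b, hab, hbi, v1, v2⟩
    rw [hgd a (by omega), hgd b (by omega)] at v1
    rw [hgd b (by omega), hgd i hi] at v2
    exact ⟨if a < k then a else a + 1, if b < k then b else b + 1,
      by split <;> split <;> omega, by split <;> split <;> omega, v1, v2⟩
  · intro h'
    obtain ⟨a, b, hab, hbei, v1, v2, ga, gb⟩ := bad12_good_pair l _ h'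
    have hak : a ≠ k := fun h => ga (h ▸ hbk)
    have hbk' : b ≠ k := fun h => gb (h ▸ hbk)
    have hei : (if i < k then i else i + 1) < l.length := by split <;> omega
    have hbei' : b < (if i < k then i else i + 1) := hbei
    have hbl : b < l.length := by omega
    have hal : a < l.length := by omega
    refine ⟨if a < k then a else a - 1, if b < k then b else b - 1, ?_, ?_, ?_, ?_⟩
    · split <;> split <;> omega
    · split at hbei' <;> split <;> omega
    · rw [gd_eraseIdx_of_ne l k a hal hk hak, gd_eraseIdx_of_ne l k b hbl hk hbk']
      exact v1
    · rw [gd_eraseIdx_of_ne l k b hbl hk hbk', hgd i hi]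
      exact v2

lemma bad13_erase_iff (l : List ℕ) (k : ℕ) (hk : k < l.length) (hbk : bad13 l k)
    (i : ℕ) (hi : i < l.length - 1) :
    bad13 (l.eraseIdx k) i ↔ bad13 l (if i < k then i else i + 1) := by
  have hlen : (l.eraseIdx k).length = l.length - 1 := by
    rw [List.length_eraseIdx, if_pos hk]
  have hgd : ∀ x, x < l.length - 1 →
      (l.eraseIdx k).getD x 0 = l.getD (if x < k then x else x + 1) 0 := by
    intro x hx
    rw [gd_eraseIdx l k x (by omega)]
    rcases Nat.lt_or_ge x k with h | h
    · rw [if_pos h, if_pos h]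
    · rw [if_neg (by omega), if_neg (by omega)]
  have hei : (if i < k then i else i + 1) < l.length := by split <;> omega
  obtain ⟨⟨a0, ha0, va0⟩, ⟨b0, hb0, hb0n, vb0⟩⟩ := hbk
  constructor
  · rintro ⟨⟨a, ha, va⟩, ⟨b, hb, hbn, vb⟩⟩
    rw [hlen] at hbn
    rw [hgd a (by omega), hgd i hi] at va
    rw [hgd b (by omega), hgd i hi] at vb
    exact ⟨⟨if a < k then a else a + 1, by split <;> split <;> omega, va⟩,
      ⟨if b < k then b else b + 1, by split <;> split <;> omega,
        by split <;> omega, vb⟩⟩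
  · rintro ⟨⟨a, ha, va⟩, ⟨b, hb, hbn, vb⟩⟩
    constructor
    · by_cases hak : a = k
      · rw [hak] at ha va
        have hik : ¬ i < k := by intro h'; rw [if_pos h'] at ha; omega
        refine ⟨a0, by omega, ?_⟩
        rw [hgd a0 (by omega), if_pos (by omega), hgd i hi]
        exact va0.trans va
      · refine ⟨if a < k then a else a - 1, ?_, ?_⟩
        · split at ha <;> split <;> omega
        · rw [gd_eraseIdx_of_ne l k a (by omega) hk hak, hgd i hi]
          exact va
    · by_cases hbk' : b = k
      · rw [hbk'] at hb vb
        have hik : i < k := by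
          by_contra h'; rw [if_neg h'] at hb; omega
        refine ⟨b0 - 1, by rw [if_pos hik] at hb; omega, by omega, ?_⟩
        rw [show b0 - 1 = if b0 < k then b0 else b0 - 1 from by rw [if_neg (by omega)],
          gd_eraseIdx_of_ne l k b0 hb0n hk (by omega), hgd i hi]
        exact vb.trans vb0
      · refine ⟨if b < k then b else b - 1, ?_, ?_, ?_⟩
        · split at hb <;> split <;> omega
        · split <;> omega
        · rw [gd_eraseIdx_of_ne l k b hbn hk hbk', hgd i hi]
          exact vb

lemma filter_range_erase (n k : ℕ) (hk : k < n) (q q' : ℕ → Bool) (hqk : q k = false)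
    (hq' : ∀ i, i < n - 1 → q' i = q (if i < k then i else i + 1)) :
    ((List.range (n - 1)).filter q').map (fun i => if i < k then i else i + 1)
      = (List.range n).filter q := by
  have hsplit1 : List.range (n - 1) = List.range' 0 k ++ List.range' k (n - 1 - k) := by
    rw [List.range_eq_range']
    have := List.range'_append (s := 0) (m := k) (n := n - 1 - k) (step := 1)
    simp only [one_mul, zero_add] at this
    rw [show k + (n - 1 - k) = n - 1 from by omega] at this
    exact this.symm
  have hsplit2 : List.range n
      = List.range' 0 k ++ (k :: List.range' (k + 1) (n - 1 - k)) := by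
    rw [List.range_eq_range']
    have h2 := List.range'_succ (s := k) (n := n - 1 - k) (step := 1)
    have := List.range'_append (s := 0) (m := k) (n := n - k) (step := 1)
    simp only [one_mul, zero_add] at this h2
    rw [show k + (n - k) = n from by omega] at this
    rw [← this]
    congr 1
    rw [show n - k = (n - 1 - k) + 1 from by omega, h2]
  rw [hsplit1, hsplit2, List.filter_append, List.filter_append, List.map_append]
  congr 1
  · -- left part: identity
    have h1 : (List.range' 0 k).filter q' = (List.range' 0 k).filter q := by
      apply List.filter_congr
      intro a ha
      rw [List.mem_range'_1] at ha
      rw [hq' a (by omega), if_pos (by omega)]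
    rw [h1]
    conv_rhs => rw [← List.map_id ((List.range' 0 k).filter q)]
    apply List.map_congr_left
    intro a ha
    have := List.mem_range'_1.1 (List.mem_of_mem_filter ha)
    rw [if_pos (by omega)]
    rfl
  · -- right part: shift by one
    rw [List.filter_cons_of_neg (by rw [hqk]; exact Bool.false_ne_true)]
    have h1 : (List.range' k (n - 1 - k)).filter q'
        = (List.range' k (n - 1 - k)).filter (fun i => q (i + 1)) := by
      apply List.filter_congr
      intro a ha
      rw [List.mem_range'_1] at ha
      rw [hq' a (by omega), if_neg (by omega)]
    rw [h1]
    have h2 : ((List.range' k (n - 1 - k)).filter (fun i => q (i + 1))).map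
          (fun i => if i < k then i else i + 1)
        = ((List.range' k (n - 1 - k)).filter (fun i => q (i + 1))).map (fun i => 1 + i) := by
      apply List.map_congr_left
      intro a ha
      have := List.mem_range'_1.1 (List.mem_of_mem_filter ha)
      rw [if_neg (by omega)]
      omega
    rw [h2]
    have h3 : (fun i => q (i + 1)) = (fun i => q (1 + i)) := by
      funext i; rw [Nat.add_comm]
    rw [h3, show (fun i => q (1 + i)) = (q ∘ fun i => 1 + i) from rfl, ← List.filter_map,
      List.map_add_range']
    rw [Nat.add_comm 1 k]

lemma keepP_eraseIdx {bad : List ℕ → ℕ → Prop} {l : List ℕ} {k : ℕ} (hk : k < l.length)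
    (hbk : bad l k)
    (hiff : ∀ i, i < l.length - 1 →
      (bad (l.eraseIdx k) i ↔ bad l (if i < k then i else i + 1))) :
    keepP bad (l.eraseIdx k) = keepP bad l := by
  have hlen : (l.eraseIdx k).length = l.length - 1 := by
    rw [List.length_eraseIdx, if_pos hk]
  unfold keepP
  rw [hlen]
  rw [← filter_range_erase l.length k hk (fun i => decide (¬ bad l i))
    (fun i => decide (¬ bad (l.eraseIdx k) i)) (by simp [hbk])
    (fun i hi => by simp only [decide_eq_decide]; rw [hiff i hi]), List.map_map]
  apply List.map_congr_left
  intro a ha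
  have ha' : a < l.length - 1 :=
    List.mem_range.1 (List.mem_of_mem_filter ha)
  simp only [Function.comp_apply]
  rw [gd_eraseIdx l k a (by omega)]
  rcases Nat.lt_or_ge a k with h | h
  · rw [if_pos h, if_pos h]
  · rw [if_neg (by omega), if_neg (by omega)]

lemma bad12_iff_ordIso {l l' : List ℕ} (h : OrdIso l l') (i : ℕ) (hi : i < l.length) :
    bad12 l i ↔ bad12 l' i := by
  obtain ⟨hlen, hcmp⟩ := h
  unfold bad12
  constructor
  · rintro ⟨a, b, hab, hbi, v1, v2⟩
    exact ⟨a, b, hab, hbi, (hcmp a b (by omega) (by omega)).1 v1,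
      (hcmp b i (by omega) hi).1 v2⟩
  · rintro ⟨a, b, hab, hbi, v1, v2⟩
    exact ⟨a, b, hab, hbi, (hcmp a b (by omega) (by omega)).2 v1,
      (hcmp b i (by omega) hi).2 v2⟩

lemma bad13_iff_ordIso {l l' : List ℕ} (h : OrdIso l l') (i : ℕ) (hi : i < l.length) :
    bad13 l i ↔ bad13 l' i := by
  obtain ⟨hlen, hcmp⟩ := h
  unfold bad13
  rw [← hlen]
  constructor
  · rintro ⟨⟨a, ha, va⟩, ⟨b, hb, hbn, vb⟩⟩
    exact ⟨⟨a, ha, (hcmp a i (by omega) hi).1 va⟩,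
      ⟨b, hb, hbn, (hcmp i b hi hbn).1 vb⟩⟩
  · rintro ⟨⟨a, ha, va⟩, ⟨b, hb, hbn, vb⟩⟩
    exact ⟨⟨a, ha, (hcmp a i (by omega) hi).2 va⟩,
      ⟨b, hb, hbn, (hcmp i b hi hbn).2 vb⟩⟩

lemma bad12_contains {l : List ℕ} {k : ℕ} (hk : k < l.length) (h : bad12 l k) :
    contains123 l := by
  obtain ⟨a, b, hab, hbk, v1, v2⟩ := h
  exact ⟨a, b, k, hab, hbk, hk, v1, v2⟩

lemma bad13_contains {l : List ℕ} {k : ℕ} (hk : k < l.length) (h : bad13 l k) :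
    contains123 l := by
  obtain ⟨⟨a, ha, va⟩, ⟨b, hb, hbn, vb⟩⟩ := h
  exact ⟨a, k, b, ha, hb, hbn, va, vb⟩

lemma keep12_of_avoid {l : List ℕ} (h : ¬ contains123 l) : keepP bad12 l = l :=
  keepP_of_no_bad (fun i hi hb => h (bad12_contains hi hb))

lemma keep13_of_avoid {l : List ℕ} (h : ¬ contains123 l) : keepP bad13 l = l :=
  keepP_of_no_bad (fun i hi hb => h (bad13_contains hi hb))

/-! ### Repl and IsCopy infrastructure -/

lemma repl_keep_all (l : SPat) : Repl [] [] l l := by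
  induction l with
  | nil => exact Repl.nil
  | cons x l ih => exact Repl.keep x ih

lemma repl_append {a1 b1 u1 u2 a2 b2 v1 v2 : SPat} (h1 : Repl a1 b1 u1 u2)
    (h2 : Repl a2 b2 v1 v2) : Repl (a1 ++ a2) (b1 ++ b2) (u1 ++ v1) (u2 ++ v2) := by
  induction h1 with
  | nil => exact h2
  | keep x _ ih => exact Repl.keep x ih
  | repl x y _ ih => exact Repl.repl x y ih

lemma repl_three (x1 x2 x3 y1 y2 y3 : Option ℕ) (t1 t2 t3 t4 : SPat) :
    Repl [x1, x2, x3] [y1, y2, y3]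
      (t1 ++ x1 :: (t2 ++ x2 :: (t3 ++ x3 :: t4)))
      (t1 ++ y1 :: (t2 ++ y2 :: (t3 ++ y3 :: t4))) :=
  repl_append (repl_keep_all t1) (Repl.repl x1 y1
    (repl_append (repl_keep_all t2) (Repl.repl x2 y2
      (repl_append (repl_keep_all t3) (Repl.repl x3 y3 (repl_keep_all t4))))))

lemma repl_nil_inv {a b ρ₁ ρ₂ : SPat} (h : Repl a b ρ₁ ρ₂) (ha : a = []) (hb : b = []) :
    ρ₁ = ρ₂ := by
  induction h with
  | nil => rfl
  | keep x _ ih => rw [ih ha hb]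
  | repl x y _ _ => simp at ha

lemma repl_cons_inv {A B ρ₁ ρ₂ : SPat} (h : Repl A B ρ₁ ρ₂) :
    ∀ x a y b, A = x :: a → B = y :: b →
      ∃ s ρ₁' ρ₂', ρ₁ = s ++ x :: ρ₁' ∧ ρ₂ = s ++ y :: ρ₂' ∧ Repl a b ρ₁' ρ₂' := by
  induction h with
  | nil => intro x a y b hx _; simp at hx
  | keep z hr ih =>
    intro x a y b hx hy
    obtain ⟨s, ρ₁', ρ₂', h1, h2, h3⟩ := ih x a y b hx hy
    exact ⟨z :: s, ρ₁', ρ₂', by rw [h1]; rfl, by rw [h2]; rfl, h3⟩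
  | repl z w hr _ =>
    intro x a y b hx hy
    cases hx; cases hy
    exact ⟨[], _, _, rfl, rfl, hr⟩

lemma repl_three_inv {x1 x2 x3 y1 y2 y3 : Option ℕ} {ρ₁ ρ₂ : SPat}
    (h : Repl [x1, x2, x3] [y1, y2, y3] ρ₁ ρ₂) :
    ∃ t1 t2 t3 t4 : SPat,
      ρ₁ = t1 ++ x1 :: (t2 ++ x2 :: (t3 ++ x3 :: t4)) ∧
      ρ₂ = t1 ++ y1 :: (t2 ++ y2 :: (t3 ++ y3 :: t4)) := by
  obtain ⟨t1, ρ1, ρ2, e1, e2, h⟩ := repl_cons_inv h x1 [x2, x3] y1 [y2, y3] rfl rfl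
  obtain ⟨t2, ρ1', ρ2', e1', e2', h⟩ := repl_cons_inv h x2 [x3] y2 [y3] rfl rfl
  obtain ⟨t3, ρ1'', ρ2'', e1'', e2'', h⟩ := repl_cons_inv h x3 [] y3 [] rfl rfl
  have := repl_nil_inv h rfl rfl
  subst this
  exact ⟨t1, t2, t3, ρ1'', by rw [e1, e1', e1''], by rw [e2, e2', e2'']⟩

lemma ints_append (u v : SPat) : ints (u ++ v) = ints u ++ ints v := by
  simp [ints]

lemma ints_some_cons (x : ℕ) (v : SPat) : ints (some x :: v) = x :: ints v := by
  simp [ints]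

lemma ints_none_cons (v : SPat) : ints (none :: v) = ints v := by
  simp [ints]

lemma ints_map_some (l : List ℕ) : ints (l.map some) = l := by
  simp [ints, List.filterMap_map]

/-- helper: OrdIso of two explicit 3-lists -/
lemma ordIso_three {u v w a b c : ℕ} (h1 : u < v) (h2 : v < w) (h3 : a < b) (h4 : b < c) :
    OrdIso [u, v, w] [a, b, c] := by
  refine ⟨rfl, fun i j hi hj => ?_⟩
  simp only [List.length_cons, List.length_nil] at hi hj
  interval_cases i <;> interval_cases j <;>
    simp only [List.getD_cons_zero, List.getD_cons_succ] <;> omega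

lemma ordIso_two {u v a b : ℕ} (h1 : u < v) (h2 : a < b) : OrdIso [u, v] [a, b] := by
  refine ⟨rfl, fun i j hi hj => ?_⟩
  simp only [List.length_cons, List.length_nil] at hi hj
  interval_cases i <;> interval_cases j <;>
    simp only [List.getD_cons_zero, List.getD_cons_succ] <;> omega

lemma len3_decomp {α : Type*} (a : List α) (h : a.length = 3) : ∃ x y z, a = [x, y, z] := by
  match a with
  | [x, y, z] => exact ⟨x, y, z, rfl⟩

lemma isCopy_pat123_shape {a : SPat} (h : IsCopy a pat123) :
    ∃ u v w : ℕ, a = [some u, some v, some w] ∧ u < v ∧ v < w := by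
  obtain ⟨hlen, hstar, hiso⟩ := h
  obtain ⟨x, y, z, rfl⟩ := len3_decomp a (by simpa [pat123] using hlen)
  have h0 := hstar 0
  have h1 := hstar 1
  have h2 := hstar 2
  simp only [pat123, List.getD_cons_zero, List.getD_cons_succ] at h0 h1 h2
  obtain ⟨u, rfl⟩ : ∃ u, x = some u := by
    cases x with
    | none => simp at h0
    | some u => exact ⟨u, rfl⟩
  obtain ⟨v, rfl⟩ : ∃ v, y = some v := by
    cases y with
    | none => simp at h1
    | some v => exact ⟨v, rfl⟩
  obtain ⟨w, rfl⟩ : ∃ w, z = some w := by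
    cases z with
    | none => simp at h2
    | some w => exact ⟨w, rfl⟩
  refine ⟨u, v, w, rfl, ?_, ?_⟩
  · have := hiso.2 0 1 (by simp [ints]) (by simp [ints])
    simp only [ints, pat123] at this ⊢
    simpa using this
  · have := hiso.2 1 2 (by simp [ints]) (by simp [ints])
    simp only [ints, pat123] at this ⊢
    simpa using this

lemma isCopy_pat12S_shape {a : SPat} (h : IsCopy a pat12S) :
    ∃ u v : ℕ, a = [some u, some v, none] ∧ u < v := by
  obtain ⟨hlen, hstar, hiso⟩ := h
  obtain ⟨x, y, z, rfl⟩ := len3_decomp a (by simpa [pat12S] using hlen)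
  have h0 := hstar 0
  have h1 := hstar 1
  have h2 := hstar 2
  simp only [pat12S, List.getD_cons_zero, List.getD_cons_succ] at h0 h1 h2
  obtain ⟨u, rfl⟩ : ∃ u, x = some u := by
    cases x with
    | none => simp at h0
    | some u => exact ⟨u, rfl⟩
  obtain ⟨v, rfl⟩ : ∃ v, y = some v := by
    cases y with
    | none => simp at h1
    | some v => exact ⟨v, rfl⟩
  obtain rfl : z = none := by
    cases z with
    | none => rfl
    | some w => simp at h2
  refine ⟨u, v, rfl, ?_⟩
  have := hiso.2 0 1 (by simp [ints]) (by simp [ints])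
  simp only [ints, pat12S] at this ⊢
  simpa using this

lemma isCopy_pat1S3_shape {a : SPat} (h : IsCopy a pat1S3) :
    ∃ u w : ℕ, a = [some u, none, some w] ∧ u < w := by
  obtain ⟨hlen, hstar, hiso⟩ := h
  obtain ⟨x, y, z, rfl⟩ := len3_decomp a (by simpa [pat1S3] using hlen)
  have h0 := hstar 0
  have h1 := hstar 1
  have h2 := hstar 2
  simp only [pat1S3, List.getD_cons_zero, List.getD_cons_succ] at h0 h1 h2
  obtain ⟨u, rfl⟩ : ∃ u, x = some u := by
    cases x with
    | none => simp at h0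
    | some u => exact ⟨u, rfl⟩
  obtain rfl : y = none := by
    cases y with
    | none => rfl
    | some w => simp at h1
  obtain ⟨w, rfl⟩ : ∃ w, z = some w := by
    cases z with
    | none => simp at h2
    | some w => exact ⟨w, rfl⟩
  refine ⟨u, w, rfl, ?_⟩
  have := hiso.2 0 1 (by simp [ints]) (by simp [ints])
  simp only [ints, pat1S3] at this ⊢
  simpa using this

lemma isCopy_pat123_mk {u v w : ℕ} (h1 : u < v) (h2 : v < w) :
    IsCopy [some u, some v, some w] pat123 := by
  refine ⟨rfl, fun i => ?_, by simpa [ints, pat123] using ordIso_three h1 h2 Nat.one_lt_two (by omega)⟩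
  match i with
  | 0 => simp [pat123]
  | 1 => simp [pat123]
  | 2 => simp [pat123]
  | (n+3) => simp [pat123, List.getD]

lemma isCopy_pat12S_mk {u v : ℕ} (h1 : u < v) :
    IsCopy [some u, some v, none] pat12S := by
  refine ⟨rfl, fun i => ?_, by simpa [ints, pat12S] using ordIso_two h1 Nat.one_lt_two⟩
  match i with
  | 0 => simp [pat12S]
  | 1 => simp [pat12S]
  | 2 => simp [pat12S]
  | (n+3) => simp [pat12S, List.getD]

lemma isCopy_pat1S3_mk {u w : ℕ} (h1 : u < w) :
    IsCopy [some u, none, some w] pat1S3 := by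
  refine ⟨rfl, fun i => ?_, by simpa [ints, pat1S3] using ordIso_two h1 (by omega : (1:ℕ) < 3)⟩
  match i with
  | 0 => simp [pat1S3]
  | 1 => simp [pat1S3]
  | 2 => simp [pat1S3]
  | (n+3) => simp [pat1S3, List.getD]

/-! ### facts about 3-way splits -/

section Split3
variable (A B C D : List ℕ) (u v w : ℕ)

lemma split3_len :
    (A ++ u :: (B ++ v :: (C ++ w :: D))).length
      = A.length + B.length + C.length + D.length + 3 := by
  simp; omega

lemma split3_gd1 : (A ++ u :: (B ++ v :: (C ++ w :: D))).getD A.length 0 = u := by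
  rw [gd_append_ge _ _ _ _ (le_refl _), Nat.sub_self, List.getD_cons_zero]

lemma split3_gd2 :
    (A ++ u :: (B ++ v :: (C ++ w :: D))).getD (A.length + 1 + B.length) 0 = v := by
  rw [gd_append_ge _ _ _ _ (by omega), show A.length + 1 + B.length - A.length
    = B.length + 1 from by omega, List.getD_cons_succ,
    gd_append_ge _ _ _ _ (le_refl _), Nat.sub_self, List.getD_cons_zero]

lemma split3_gd3 :
    (A ++ u :: (B ++ v :: (C ++ w :: D))).getD (A.length + B.length + C.length + 2) 0 = w := by
  have hre : A ++ u :: (B ++ v :: (C ++ w :: D))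
      = (A ++ u :: (B ++ v :: C)) ++ w :: D := by simp
  rw [hre, gd_append_ge _ _ _ _ (by simp; omega)]
  rw [show A.length + B.length + C.length + 2 - (A ++ u :: (B ++ v :: C)).length = 0
    from by simp; omega, List.getD_cons_zero]

lemma split3_erase3 :
    (A ++ u :: (B ++ v :: (C ++ w :: D))).eraseIdx (A.length + B.length + C.length + 2)
      = A ++ u :: (B ++ v :: (C ++ D)) := by
  have hre : A ++ u :: (B ++ v :: (C ++ w :: D))
      = (A ++ u :: (B ++ v :: C)) ++ w :: D := by simp
  rw [hre, show A.length + B.length + C.length + 2 = (A ++ u :: (B ++ v :: C)).length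
    from by simp; omega, eraseIdx_split]
  simp

lemma split3_erase2 :
    (A ++ u :: (B ++ v :: (C ++ w :: D))).eraseIdx (A.length + 1 + B.length)
      = A ++ u :: (B ++ (C ++ w :: D)) := by
  have hre : A ++ u :: (B ++ v :: (C ++ w :: D))
      = (A ++ u :: B) ++ v :: (C ++ w :: D) := by simp
  rw [hre, show A.length + 1 + B.length = (A ++ u :: B).length from by simp; omega,
    eraseIdx_split]
  simp

end Split3

/-- split a list at three positions -/
lemma split3_of_lt (m : List ℕ) {i j k : ℕ} (hij : i < j) (hjk : j < k) (hk : k < m.length) :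
    ∃ t1 t2 t3 t4 : List ℕ,
      m = t1 ++ m.getD i 0 :: (t2 ++ m.getD j 0 :: (t3 ++ m.getD k 0 :: t4)) ∧
      t1.length = i ∧ t2.length = j - i - 1 ∧ t3.length = k - j - 1 := by
  refine ⟨m.take i, (m.take j).drop (i+1), (m.take k).drop (j+1), m.drop (k+1), ?_, ?_, ?_, ?_⟩
  · have e1 : m = m.take i ++ m.drop i := (List.take_append_drop i m).symm
    have e2 : m.drop i = m.getD i 0 :: m.drop (i+1) := by
      rw [List.getD_eq_getElem _ _ (by omega)]
      exact List.drop_eq_getElem_cons (by omega)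
    have e3 : m.drop (i+1) = (m.take j).drop (i+1) ++ m.drop j := by
      conv_lhs => rw [← List.take_append_drop j m]
      rw [List.drop_append_of_le_length (by rw [List.length_take]; omega)]
    have e4 : m.drop j = m.getD j 0 :: m.drop (j+1) := by
      rw [List.getD_eq_getElem _ _ (by omega)]
      exact List.drop_eq_getElem_cons (by omega)
    have e5 : m.drop (j+1) = (m.take k).drop (j+1) ++ m.drop k := by
      conv_lhs => rw [← List.take_append_drop k m]
      rw [List.drop_append_of_le_length (by rw [List.length_take]; omega)]
    have e6 : m.drop k = m.getD k 0 :: m.drop (k+1) := by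
      rw [List.getD_eq_getElem _ _ hk]
      exact List.drop_eq_getElem_cons hk
    conv_lhs => rw [e1, e2, e3, e4, e5, e6]
  · rw [List.length_take]; omega
  · rw [List.length_drop, List.length_take]; omega
  · rw [List.length_drop, List.length_take]; omega

/-! ### forward constructions -/

lemma isResult_of_bad12 {l : List ℕ} (hl : l.Nodup) {k : ℕ} (hk : k < l.length)
    (hb : bad12 l k) :
    IsResult pat123 pat12S (renumber l) (renumber (l.eraseIdx k)) := by
  set m := renumber l with hm
  have hmnd : m.Nodup := renumber_nodup l hl
  have hOI : OrdIso l m := ordIso_renumber l hl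
  have hmlen : m.length = l.length := renumber_length l
  have hbm : bad12 m k := (bad12_iff_ordIso hOI k hk).1 hb
  obtain ⟨i, j, hij, hjk, v1, v2⟩ := hbm
  obtain ⟨t1, t2, t3, t4, hdec, hl1, hl2, hl3⟩ := split3_of_lt m hij hjk (by omega)
  set mi := m.getD i 0 with hmi
  set mj := m.getD j 0 with hmj
  set mk := m.getD k 0 with hmk
  set ρ₁ : SPat := t1.map some ++ some mi ::
    (t2.map some ++ some mj :: (t3.map some ++ some mk :: t4.map some)) with hρ₁
  set ρ₂ : SPat := t1.map some ++ some mi ::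
    (t2.map some ++ some mj :: (t3.map some ++ none :: t4.map some)) with hρ₂
  have hr1 : ints ρ₁ = m := by
    rw [hρ₁, ints_append, ints_some_cons, ints_append, ints_some_cons, ints_append,
      ints_some_cons, ints_map_some, ints_map_some, ints_map_some, ints_map_some]
    exact hdec.symm
  have hr2 : ints ρ₂ = m.eraseIdx k := by
    rw [hρ₂, ints_append, ints_some_cons, ints_append, ints_some_cons, ints_append,
      ints_none_cons, ints_map_some, ints_map_some, ints_map_some, ints_map_some]
    have hk' : k = t1.length + t2.length + t3.length + 2 := by omega
    rw [hk']
    conv_rhs => rw [hdec]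
    exact (split3_erase3 t1 t2 t3 t4 mi mj mk).symm
  have hmem : ∀ x ∈ m, 0 < x := fun x hx => renumber_pos l (hm ▸ hx)
  have hminm : mi ∈ m := gd_mem m i (by omega)
  have hmjnm : mj ∈ m := gd_mem m j (by omega)
  have herasend : (l.eraseIdx k).Nodup := (List.eraseIdx_sublist l k).nodup hl
  refine ⟨ρ₁, ρ₂, [some mi, some mj, some mk], [some mi, some mj, none],
    ⟨by rw [hr1]; exact hmnd, by rw [hr1]; exact hmem⟩,
    by rw [hr1]; exact ordIso_refl m,
    isCopy_pat123_mk v1 v2,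
    ⟨by simp [ints]; omega, ?_⟩,
    isCopy_pat12S_mk v1,
    by intro x hx _; simp [ints] at hx ⊢; tauto,
    ?_,
    by rw [hρ₁, hρ₂]; exact repl_three _ _ _ _ _ _ _ _ _ _,
    isPermList_renumber _ herasend,
    ?_⟩
  · intro x hx
    simp [ints] at hx
    rcases hx with rfl | rfl
    · exact hmem _ hminm
    · exact hmem _ hmjnm
  · intro i' j' x h1 h2
    rcases i' with _ | _ | _ | i' <;> rcases j' with _ | _ | _ | j' <;>
      simp [pat123, pat12S, List.getD] at h1 h2 ⊢ <;> omega
  · rw [hr2]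
    exact ordIso_trans (ordIso_eraseIdx (ordIso_symm hOI) k)
      (ordIso_renumber _ herasend)

lemma isResult_of_bad13 {l : List ℕ} (hl : l.Nodup) {k : ℕ} (hk : k < l.length)
    (hb : bad13 l k) :
    IsResult pat123 pat1S3 (renumber l) (renumber (l.eraseIdx k)) := by
  set m := renumber l with hm
  have hmnd : m.Nodup := renumber_nodup l hl
  have hOI : OrdIso l m := ordIso_renumber l hl
  have hmlen : m.length = l.length := renumber_length l
  have hbm : bad13 m k := (bad13_iff_ordIso hOI k hk).1 hb
  obtain ⟨⟨i, hik, vi⟩, ⟨j, hkj, hjn, vj⟩⟩ := hbm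
  obtain ⟨t1, t2, t3, t4, hdec, hl1, hl2, hl3⟩ := split3_of_lt m hik hkj hjn
  set mi := m.getD i 0 with hmi
  set mk := m.getD k 0 with hmk
  set mj := m.getD j 0 with hmj
  set ρ₁ : SPat := t1.map some ++ some mi ::
    (t2.map some ++ some mk :: (t3.map some ++ some mj :: t4.map some)) with hρ₁
  set ρ₂ : SPat := t1.map some ++ some mi ::
    (t2.map some ++ none :: (t3.map some ++ some mj :: t4.map some)) with hρ₂
  have hr1 : ints ρ₁ = m := by
    rw [hρ₁, ints_append, ints_some_cons, ints_append, ints_some_cons, ints_append,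
      ints_some_cons, ints_map_some, ints_map_some, ints_map_some, ints_map_some]
    exact hdec.symm
  have hr2 : ints ρ₂ = m.eraseIdx k := by
    rw [hρ₂, ints_append, ints_some_cons, ints_append, ints_none_cons, ints_append,
      ints_some_cons, ints_map_some, ints_map_some, ints_map_some, ints_map_some]
    have hk' : k = t1.length + 1 + t2.length := by omega
    rw [hk']
    conv_rhs => rw [hdec]
    exact (split3_erase2 t1 t2 t3 t4 mi mk mj).symm
  have hmem : ∀ x ∈ m, 0 < x := fun x hx => renumber_pos l (hm ▸ hx)
  have hminm : mi ∈ m := gd_mem m i (by omega)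
  have hmjnm : mj ∈ m := gd_mem m j (by omega)
  have herasend : (l.eraseIdx k).Nodup := (List.eraseIdx_sublist l k).nodup hl
  refine ⟨ρ₁, ρ₂, [some mi, some mk, some mj], [some mi, none, some mj],
    ⟨by rw [hr1]; exact hmnd, by rw [hr1]; exact hmem⟩,
    by rw [hr1]; exact ordIso_refl m,
    isCopy_pat123_mk vi vj,
    ⟨by simp [ints]; omega, ?_⟩,
    isCopy_pat1S3_mk (vi.trans vj),
    by intro x hx _; simp [ints] at hx ⊢; tauto,
    ?_,
    by rw [hρ₁, hρ₂]; exact repl_three _ _ _ _ _ _ _ _ _ _,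
    isPermList_renumber _ herasend,
    ?_⟩
  · intro x hx
    simp [ints] at hx
    rcases hx with rfl | rfl
    · exact hmem _ hminm
    · exact hmem _ hmjnm
  · intro i' j' x h1 h2
    rcases i' with _ | _ | _ | i' <;> rcases j' with _ | _ | _ | j' <;>
      simp [pat123, pat1S3, List.getD] at h1 h2 ⊢ <;> omega
  · rw [hr2]
    exact ordIso_trans (ordIso_eraseIdx (ordIso_symm hOI) k)
      (ordIso_renumber _ herasend)

/-! ### inversion lemmas -/

lemma isResult_12S_inv {π σ : List ℕ} (hπ : IsPermList π) (h : IsResult pat123 pat12S π σ) :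
    ∃ k, k < π.length ∧ bad12 π k ∧ σ = renumber (π.eraseIdx k) := by
  obtain ⟨ρ₁, ρ₂, a, b, hS1, hOI, hCa, hSb, hCb, hcont, hag, hrepl, hσP, hOI2⟩ := h
  obtain ⟨u, v, w, rfl, huv, hvw⟩ := isCopy_pat123_shape hCa
  obtain ⟨p, q, rfl, hpq⟩ := isCopy_pat12S_shape hCb
  have hp : u = p := by
    have := hag 0 0 1 (by simp [pat123]) (by simp [pat12S])
    simpa using this
  have hq : v = q := by
    have := hag 1 1 2 (by simp [pat123]) (by simp [pat12S])
    simpa using this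
  subst hp hq
  obtain ⟨t1, t2, t3, t4, hd1, hd2⟩ := repl_three_inv hrepl
  subst hd1 hd2
  set A := ints t1
  set B := ints t2
  set C := ints t3
  set D := ints t4
  have hi1 : ints (t1 ++ some u :: (t2 ++ some v :: (t3 ++ some w :: t4)))
      = A ++ u :: (B ++ v :: (C ++ w :: D)) := by
    rw [ints_append, ints_some_cons, ints_append, ints_some_cons, ints_append, ints_some_cons]
  have hi2 : ints (t1 ++ some u :: (t2 ++ some v :: (t3 ++ none :: t4)))
      = A ++ u :: (B ++ v :: (C ++ D)) := by
    rw [ints_append, ints_some_cons, ints_append, ints_some_cons, ints_append, ints_none_cons]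
  set k := A.length + B.length + C.length + 2 with hkdef
  have hlen1 : (A ++ u :: (B ++ v :: (C ++ w :: D))).length
      = A.length + B.length + C.length + D.length + 3 := split3_len A B C D u v w
  have hπlen : π.length = A.length + B.length + C.length + D.length + 3 := by
    rw [hOI.1, hi1, hlen1]
  have hbad : bad12 (A ++ u :: (B ++ v :: (C ++ w :: D))) k :=
    ⟨A.length, A.length + 1 + B.length, by omega, by omega,
      by rw [split3_gd1, split3_gd2]; exact huv,
      by rw [split3_gd2, split3_gd3]; exact hvw⟩
  have hbadπ : bad12 π k := by
    have := bad12_iff_ordIso hOI k (by omega)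
    rw [hi1] at this
    exact this.2 hbad
  have he : ints (t1 ++ some u :: (t2 ++ some v :: (t3 ++ none :: t4)))
      = (ints (t1 ++ some u :: (t2 ++ some v :: (t3 ++ some w :: t4)))).eraseIdx k := by
    rw [hi1, hi2, hkdef, split3_erase3]
  have hnd1 : (ints (t1 ++ some u :: (t2 ++ some v :: (t3 ++ some w :: t4)))).Nodup := hS1.1
  have hnd2 : (ints (t1 ++ some u :: (t2 ++ some v :: (t3 ++ none :: t4)))).Nodup := by
    rw [he]; exact (List.eraseIdx_sublist _ k).nodup hnd1
  refine ⟨k, by omega, hbadπ, ?_⟩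
  calc σ = renumber σ := (renumber_eq_self hσP).symm
    _ = renumber (ints (t1 ++ some u :: (t2 ++ some v :: (t3 ++ none :: t4)))) :=
        (renumber_eq_of_ordIso hnd2 hOI2).symm
    _ = renumber (π.eraseIdx k) := by
        rw [he]
        exact (renumber_eq_of_ordIso ((List.eraseIdx_sublist π k).nodup (isPermList_nodup hπ))
          (ordIso_eraseIdx hOI k)).symm

lemma isResult_12S_rev_inv {π σ : List ℕ} (hπ : IsPermList π) (h : IsResult pat12S pat123 π σ) :
    ∃ k, k < σ.length ∧ bad12 σ k ∧ π = renumber (σ.eraseIdx k) := by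
  obtain ⟨ρ₁, ρ₂, a, b, hS1, hOI, hCa, hSb, hCb, hcont, hag, hrepl, hσP, hOI2⟩ := h
  obtain ⟨u, v, rfl, huv⟩ := isCopy_pat12S_shape hCa
  obtain ⟨p, q, r, rfl, hpq, hqr⟩ := isCopy_pat123_shape hCb
  have hp : u = p := by
    have := hag 0 0 1 (by simp [pat12S]) (by simp [pat123])
    simpa using this
  have hq : v = q := by
    have := hag 1 1 2 (by simp [pat12S]) (by simp [pat123])
    simpa using this
  subst hp hq
  obtain ⟨t1, t2, t3, t4, hd1, hd2⟩ := repl_three_inv hrepl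
  subst hd1 hd2
  set A := ints t1
  set B := ints t2
  set C := ints t3
  set D := ints t4
  have hi1 : ints (t1 ++ some u :: (t2 ++ some v :: (t3 ++ none :: t4)))
      = A ++ u :: (B ++ v :: (C ++ D)) := by
    rw [ints_append, ints_some_cons, ints_append, ints_some_cons, ints_append, ints_none_cons]
  have hi2 : ints (t1 ++ some u :: (t2 ++ some v :: (t3 ++ some r :: t4)))
      = A ++ u :: (B ++ v :: (C ++ r :: D)) := by
    rw [ints_append, ints_some_cons, ints_append, ints_some_cons, ints_append, ints_some_cons]
  have hfresh : r ∉ ints (t1 ++ some u :: (t2 ++ some v :: (t3 ++ none :: t4))) := by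
    intro hr
    have := hcont r (by simp [ints]) hr
    simp [ints] at this
    omega
  set k := A.length + B.length + C.length + 2 with hkdef
  have hlen2 : (A ++ u :: (B ++ v :: (C ++ r :: D))).length
      = A.length + B.length + C.length + D.length + 3 := split3_len A B C D u v r
  have hσlen : σ.length = A.length + B.length + C.length + D.length + 3 := by
    rw [← hOI2.1, hi2, hlen2]
  have hbad : bad12 (A ++ u :: (B ++ v :: (C ++ r :: D))) k :=
    ⟨A.length, A.length + 1 + B.length, by omega, by omega,
      by rw [split3_gd1, split3_gd2]; exact huv,
      by rw [split3_gd2, split3_gd3]; omega⟩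
  have hbadσ : bad12 σ k := by
    have := bad12_iff_ordIso hOI2 k (by rw [hi2]; omega)
    rw [hi2] at this
    exact this.1 hbad
  have he : ints (t1 ++ some u :: (t2 ++ some v :: (t3 ++ none :: t4)))
      = (ints (t1 ++ some u :: (t2 ++ some v :: (t3 ++ some r :: t4)))).eraseIdx k := by
    rw [hi1, hi2, hkdef, split3_erase3]
  have hnd2 : (ints (t1 ++ some u :: (t2 ++ some v :: (t3 ++ some r :: t4)))).Nodup := by
    rw [hi2, show A ++ u :: (B ++ v :: (C ++ r :: D))
      = (A ++ u :: (B ++ v :: C)) ++ r :: D from by simp, List.nodup_middle, List.nodup_cons]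
    constructor
    · intro hr
      apply hfresh
      rw [hi1, show A ++ u :: (B ++ v :: (C ++ D)) = (A ++ u :: (B ++ v :: C)) ++ D
        from by simp]
      exact hr
    · have := hS1.1
      rw [hi1, show A ++ u :: (B ++ v :: (C ++ D)) = (A ++ u :: (B ++ v :: C)) ++ D
        from by simp] at this
      exact this
  refine ⟨k, by omega, hbadσ, ?_⟩
  calc π = renumber π := (renumber_eq_self hπ).symm
    _ = renumber (ints (t1 ++ some u :: (t2 ++ some v :: (t3 ++ none :: t4)))) :=
        renumber_eq_of_ordIso (isPermList_nodup hπ) hOI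
    _ = renumber (σ.eraseIdx k) := by
        rw [he]
        exact renumber_eq_of_ordIso ((List.eraseIdx_sublist _ k).nodup hnd2)
          (ordIso_eraseIdx hOI2 k)

lemma isResult_1S3_inv {π σ : List ℕ} (hπ : IsPermList π) (h : IsResult pat123 pat1S3 π σ) :
    ∃ k, k < π.length ∧ bad13 π k ∧ σ = renumber (π.eraseIdx k) := by
  obtain ⟨ρ₁, ρ₂, a, b, hS1, hOI, hCa, hSb, hCb, hcont, hag, hrepl, hσP, hOI2⟩ := h
  obtain ⟨u, v, w, rfl, huv, hvw⟩ := isCopy_pat123_shape hCa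
  obtain ⟨p, r, rfl, hpr⟩ := isCopy_pat1S3_shape hCb
  have hp : u = p := by
    have := hag 0 0 1 (by simp [pat123]) (by simp [pat1S3])
    simpa using this
  have hr : w = r := by
    have := hag 2 2 3 (by simp [pat123]) (by simp [pat1S3])
    simpa using this
  subst hp hr
  obtain ⟨t1, t2, t3, t4, hd1, hd2⟩ := repl_three_inv hrepl
  subst hd1 hd2
  set A := ints t1
  set B := ints t2
  set C := ints t3
  set D := ints t4
  have hi1 : ints (t1 ++ some u :: (t2 ++ some v :: (t3 ++ some w :: t4)))
      = A ++ u :: (B ++ v :: (C ++ w :: D)) := by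
    rw [ints_append, ints_some_cons, ints_append, ints_some_cons, ints_append, ints_some_cons]
  have hi2 : ints (t1 ++ some u :: (t2 ++ none :: (t3 ++ some w :: t4)))
      = A ++ u :: (B ++ (C ++ w :: D)) := by
    rw [ints_append, ints_some_cons, ints_append, ints_none_cons, ints_append, ints_some_cons]
  set k := A.length + 1 + B.length with hkdef
  have hlen1 : (A ++ u :: (B ++ v :: (C ++ w :: D))).length
      = A.length + B.length + C.length + D.length + 3 := split3_len A B C D u v w
  have hπlen : π.length = A.length + B.length + C.length + D.length + 3 := by
    rw [hOI.1, hi1, hlen1]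
  have hbad : bad13 (A ++ u :: (B ++ v :: (C ++ w :: D))) k :=
    ⟨⟨A.length, by omega, by rw [split3_gd1, split3_gd2]; exact huv⟩,
     ⟨A.length + B.length + C.length + 2, by omega, by rw [hlen1]; omega,
      by rw [split3_gd2, split3_gd3]; exact hvw⟩⟩
  have hbadπ : bad13 π k := by
    have := bad13_iff_ordIso hOI k (by omega)
    rw [hi1] at this
    exact this.2 hbad
  have he : ints (t1 ++ some u :: (t2 ++ none :: (t3 ++ some w :: t4)))
      = (ints (t1 ++ some u :: (t2 ++ some v :: (t3 ++ some w :: t4)))).eraseIdx k := by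
    rw [hi1, hi2, hkdef, split3_erase2]
  have hnd1 : (ints (t1 ++ some u :: (t2 ++ some v :: (t3 ++ some w :: t4)))).Nodup := hS1.1
  have hnd2 : (ints (t1 ++ some u :: (t2 ++ none :: (t3 ++ some w :: t4)))).Nodup := by
    rw [he]; exact (List.eraseIdx_sublist _ k).nodup hnd1
  refine ⟨k, by omega, hbadπ, ?_⟩
  calc σ = renumber σ := (renumber_eq_self hσP).symm
    _ = renumber (ints (t1 ++ some u :: (t2 ++ none :: (t3 ++ some w :: t4)))) :=
        (renumber_eq_of_ordIso hnd2 hOI2).symm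
    _ = renumber (π.eraseIdx k) := by
        rw [he]
        exact (renumber_eq_of_ordIso ((List.eraseIdx_sublist π k).nodup (isPermList_nodup hπ))
          (ordIso_eraseIdx hOI k)).symm

lemma isResult_1S3_rev_inv {π σ : List ℕ} (hπ : IsPermList π) (h : IsResult pat1S3 pat123 π σ) :
    ∃ k, k < σ.length ∧ bad13 σ k ∧ π = renumber (σ.eraseIdx k) := by
  obtain ⟨ρ₁, ρ₂, a, b, hS1, hOI, hCa, hSb, hCb, hcont, hag, hrepl, hσP, hOI2⟩ := h
  obtain ⟨u, w, rfl, huw⟩ := isCopy_pat1S3_shape hCa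
  obtain ⟨p, q, r, rfl, hpq, hqr⟩ := isCopy_pat123_shape hCb
  have hp : u = p := by
    have := hag 0 0 1 (by simp [pat1S3]) (by simp [pat123])
    simpa using this
  have hr : w = r := by
    have := hag 2 2 3 (by simp [pat1S3]) (by simp [pat123])
    simpa using this
  subst hp hr
  obtain ⟨t1, t2, t3, t4, hd1, hd2⟩ := repl_three_inv hrepl
  subst hd1 hd2
  set A := ints t1
  set B := ints t2
  set C := ints t3
  set D := ints t4
  have hi1 : ints (t1 ++ some u :: (t2 ++ none :: (t3 ++ some w :: t4)))
      = A ++ u :: (B ++ (C ++ w :: D)) := by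
    rw [ints_append, ints_some_cons, ints_append, ints_none_cons, ints_append, ints_some_cons]
  have hi2 : ints (t1 ++ some u :: (t2 ++ some q :: (t3 ++ some w :: t4)))
      = A ++ u :: (B ++ q :: (C ++ w :: D)) := by
    rw [ints_append, ints_some_cons, ints_append, ints_some_cons, ints_append, ints_some_cons]
  have hfresh : q ∉ ints (t1 ++ some u :: (t2 ++ none :: (t3 ++ some w :: t4))) := by
    intro hq
    have := hcont q (by simp [ints]) hq
    simp [ints] at this
    omega
  set k := A.length + 1 + B.length with hkdef
  have hlen2 : (A ++ u :: (B ++ q :: (C ++ w :: D))).length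
      = A.length + B.length + C.length + D.length + 3 := split3_len A B C D u q w
  have hσlen : σ.length = A.length + B.length + C.length + D.length + 3 := by
    rw [← hOI2.1, hi2, hlen2]
  have hbad : bad13 (A ++ u :: (B ++ q :: (C ++ w :: D))) k :=
    ⟨⟨A.length, by omega, by rw [split3_gd1, split3_gd2]; exact hpq⟩,
     ⟨A.length + B.length + C.length + 2, by omega, by rw [hlen2]; omega,
      by rw [split3_gd2, split3_gd3]; exact hqr⟩⟩
  have hbadσ : bad13 σ k := by
    have := bad13_iff_ordIso hOI2 k (by rw [hi2]; omega)
    rw [hi2] at this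
    exact this.1 hbad
  have he : ints (t1 ++ some u :: (t2 ++ none :: (t3 ++ some w :: t4)))
      = (ints (t1 ++ some u :: (t2 ++ some q :: (t3 ++ some w :: t4)))).eraseIdx k := by
    rw [hi1, hi2, hkdef, split3_erase2]
  have hnd2 : (ints (t1 ++ some u :: (t2 ++ some q :: (t3 ++ some w :: t4)))).Nodup := by
    rw [hi2, show A ++ u :: (B ++ q :: (C ++ w :: D))
      = (A ++ u :: B) ++ q :: (C ++ w :: D) from by simp, List.nodup_middle, List.nodup_cons]
    constructor
    · intro hq
      apply hfresh
      rw [hi1, show A ++ u :: (B ++ (C ++ w :: D)) = (A ++ u :: B) ++ (C ++ w :: D)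
        from by simp]
      exact hq
    · have := hS1.1
      rw [hi1, show A ++ u :: (B ++ (C ++ w :: D)) = (A ++ u :: B) ++ (C ++ w :: D)
        from by simp] at this
      exact this
  refine ⟨k, by omega, hbadσ, ?_⟩
  calc π = renumber π := (renumber_eq_self hπ).symm
    _ = renumber (ints (t1 ++ some u :: (t2 ++ none :: (t3 ++ some w :: t4)))) :=
        renumber_eq_of_ordIso (isPermList_nodup hπ) hOI
    _ = renumber (σ.eraseIdx k) := by
        rw [he]
        exact renumber_eq_of_ordIso ((List.eraseIdx_sublist _ k).nodup hnd2)
          (ordIso_eraseIdx hOI2 k)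

/-! ### the greedy process -/

lemma mem_triples123 (l : List ℕ) (i j k : ℕ) :
    (i, j, k) ∈ triples123 l ↔
      i < j ∧ j < k ∧ k < l.length ∧ l.getD i 0 < l.getD j 0 ∧ l.getD j 0 < l.getD k 0 := by
  unfold triples123
  rw [List.mem_flatMap]
  constructor
  · rintro ⟨a, ha, hmem⟩
    rw [List.mem_flatMap] at hmem
    obtain ⟨b, hb, hmem⟩ := hmem
    rw [List.mem_filterMap] at hmem
    obtain ⟨c, hc, heq⟩ := hmem
    split at heq
    · rename_i hcond
      obtain ⟨h1, h2, h3, h4⟩ := hcond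
      injection heq with h5
      injection h5 with h5a h5b
      injection h5b with h5b h5c
      subst h5a; subst h5b; subst h5c
      exact ⟨h1, h2, List.mem_range.1 hc, h3, h4⟩
    · exact absurd heq (by simp)
  · rintro ⟨h1, h2, h3, h4, h5⟩
    refine ⟨i, List.mem_range.2 (by omega), ?_⟩
    rw [List.mem_flatMap]
    refine ⟨j, List.mem_range.2 (by omega), ?_⟩
    rw [List.mem_filterMap]
    exact ⟨k, List.mem_range.2 h3, by rw [if_pos ⟨h1, h2, h4, h5⟩]⟩

lemma leftmost123_none {l : List ℕ} (h : leftmost123 l = none) : ¬ contains123 l := by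
  rintro ⟨i, j, k, h1, h2, h3, h4, h5⟩
  have hmem : (i, j, k) ∈ triples123 l := (mem_triples123 l i j k).2 ⟨h1, h2, h3, h4, h5⟩
  unfold leftmost123 at h
  rw [List.head?_eq_none_iff] at h
  rw [h] at hmem
  simp at hmem

lemma leftmost123_some {l : List ℕ} {t : ℕ × ℕ × ℕ} (h : leftmost123 l = some t) :
    t.1 < t.2.1 ∧ t.2.1 < t.2.2 ∧ t.2.2 < l.length ∧
      l.getD t.1 0 < l.getD t.2.1 0 ∧ l.getD t.2.1 0 < l.getD t.2.2 0 := by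
  unfold leftmost123 at h
  rw [List.head?_eq_some_iff] at h
  obtain ⟨ys, hys⟩ := h
  have hmem : t ∈ triples123 l := by rw [hys]; exact List.mem_cons_self
  obtain ⟨i, j, k⟩ := t
  exact (mem_triples123 l i j k).1 hmem

lemma pIter_spec (d : ℕ × ℕ × ℕ → ℕ) (bad : List ℕ → ℕ → Prop)
    (hsel : ∀ (l : List ℕ) (i j k : ℕ), i < j → j < k → k < l.length →
      l.getD i 0 < l.getD j 0 → l.getD j 0 < l.getD k 0 →
      d (i, j, k) < l.length ∧ bad l (d (i, j, k)))
    (herase : ∀ (l : List ℕ) (k : ℕ), k < l.length → bad l k →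
      keepP bad (l.eraseIdx k) = keepP bad l) :
    ∀ (n : ℕ) (l : List ℕ), l.length ≤ n →
      ¬ contains123 (pIter d n l) ∧ keepP bad (pIter d n l) = keepP bad l := by
  intro n
  induction n with
  | zero =>
    intro l hl
    have : l.length = 0 := by omega
    refine ⟨?_, rfl⟩
    rintro ⟨i, j, k, h1, h2, h3, _⟩
    simp only [pIter] at h3
    omega
  | succ n ih =>
    intro l hl
    simp only [pIter]
    cases hlm : leftmost123 l with
    | none => exact ⟨leftmost123_none hlm, rfl⟩
    | some t =>
      obtain ⟨h1, h2, h3, h4, h5⟩ := leftmost123_some hlm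
      obtain ⟨hd1, hd2⟩ := hsel l t.1 t.2.1 t.2.2 h1 h2 h3 h4 h5
      have hlen : (l.eraseIdx (d t)).length = l.length - 1 := by
        rw [List.length_eraseIdx, if_pos hd1]
      obtain ⟨ha, hb⟩ := ih (l.eraseIdx (d t)) (by omega)
      refine ⟨ha, ?_⟩
      rw [hb, herase l (d t) hd1 hd2]

lemma isResult_isPermList {α β : SPat} {π σ : List ℕ} (h : IsResult α β π σ) :
    IsPermList σ := by
  obtain ⟨_, _, _, _, _, _, _, _, _, _, _, _, hσ, _⟩ := h
  exact hσ

/-- the master lemma, shared by the two choices of γ -/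
lemma primitive_side (bad : List ℕ → ℕ → Prop) (d : ℕ × ℕ × ℕ → ℕ) (γ : SPat)
    (hfor : ∀ (l : List ℕ), l.Nodup → ∀ k, k < l.length → bad l k →
      IsResult pat123 γ (renumber l) (renumber (l.eraseIdx k)))
    (hinv1 : ∀ π σ : List ℕ, IsPermList π → IsResult pat123 γ π σ →
      ∃ k, k < π.length ∧ bad π k ∧ σ = renumber (π.eraseIdx k))
    (hinv2 : ∀ π σ : List ℕ, IsPermList π → IsResult γ pat123 π σ →
      ∃ k, k < σ.length ∧ bad σ k ∧ π = renumber (σ.eraseIdx k))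
    (hsel : ∀ (l : List ℕ) (i j k : ℕ), i < j → j < k → k < l.length →
      l.getD i 0 < l.getD j 0 → l.getD j 0 < l.getD k 0 →
      d (i, j, k) < l.length ∧ bad l (d (i, j, k)))
    (herase : ∀ (l : List ℕ) (k : ℕ), k < l.length → bad l k →
      keepP bad (l.eraseIdx k) = keepP bad l)
    (hOIb : ∀ {l l' : List ℕ}, OrdIso l l' → ∀ i, i < l.length → (bad l i ↔ bad l' i))
    (havoid : ∀ {l : List ℕ}, ¬ contains123 l → keepP bad l = l)
    (π : List ℕ) (hπ : IsPermList π) :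
    PermEquiv pat123 γ π (pGamma d π) ∧
      ∀ σ : List ℕ, IsPermList σ → PermEquiv pat123 γ π σ →
        (pGamma d π).length ≤ σ.length ∧
          (σ.length = (pGamma d π).length → σ = pGamma d π) := by
  have hπnd : π.Nodup := isPermList_nodup hπ
  -- the invariant
  set Inv : List ℕ → List ℕ := fun l => renumber (keepP bad l) with hInv
  -- Inv is stable under one erase step at a bad position, after renumbering
  have hstep : ∀ (τ : List ℕ) (k : ℕ), τ.Nodup → k < τ.length → bad τ k →
      Inv (renumber (τ.eraseIdx k)) = Inv τ := by
    intro τ k hτnd hk hbk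
    have hend : (τ.eraseIdx k).Nodup := (List.eraseIdx_sublist τ k).nodup hτnd
    have h1 : OrdIso (τ.eraseIdx k) (renumber (τ.eraseIdx k)) := ordIso_renumber _ hend
    have h2 : renumber (keepP bad (τ.eraseIdx k))
        = renumber (keepP bad (renumber (τ.eraseIdx k))) :=
      renumber_eq_of_ordIso ((keepP_sublist bad _).nodup hend)
        (ordIso_keepP h1 (fun i hi => hOIb h1 i hi))
    simp only [hInv]
    rw [← h2, herase τ k hk hbk]
  -- invariance along the equivalence
  have hchaininv : ∀ σ : List ℕ, PermEquiv pat123 γ π σ → IsPermList σ ∧ Inv σ = Inv π := by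
    intro σ hσ
    unfold PermEquiv at hσ
    induction hσ with
    | refl => exact ⟨hπ, rfl⟩
    | tail hab hbc ih =>
      rename_i b c
      obtain ⟨hbP, hbInv⟩ := ih
      have hcP : IsPermList c := by
        rcases hbc with h | h
        · exact isResult_isPermList h
        · exact isResult_isPermList h
      refine ⟨hcP, ?_⟩
      rcases hbc with h | h
      · obtain ⟨k, hk, hbk, rfl⟩ := hinv1 b c hbP h
        rw [hstep b k (isPermList_nodup hbP) hk hbk, hbInv]
      · obtain ⟨k, hk, hbk, hbeq⟩ := hinv2 b c hbP h
        rw [← hbInv, hbeq, hstep c k (isPermList_nodup hcP) hk hbk]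
  -- facts about the greedy iteration
  obtain ⟨havF, hkeepF⟩ := pIter_spec d bad hsel herase π.length π (le_refl _)
  have hFeq : pIter d π.length π = keepP bad π := by
    rw [← hkeepF, havoid havF]
  have hpg : pGamma d π = Inv π := by
    simp only [pGamma, hInv, hFeq]
  -- the equivalence chain
  have hchain : ∀ (n : ℕ) (l : List ℕ), l.Nodup →
      PermEquiv pat123 γ (renumber l) (renumber (pIter d n l)) := by
    intro n
    induction n with
    | zero => intro l _; exact Relation.ReflTransGen.refl
    | succ n ih =>
      intro l hl
      simp only [pIter]
      cases hlm : leftmost123 l with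
      | none => exact Relation.ReflTransGen.refl
      | some t =>
        obtain ⟨h1, h2, h3, h4, h5⟩ := leftmost123_some hlm
        obtain ⟨hd1, hd2⟩ := hsel l t.1 t.2.1 t.2.2 h1 h2 h3 h4 h5
        have hstep1 : IsResult pat123 γ (renumber l) (renumber (l.eraseIdx (d t))) := by
          exact hfor l hl (d t) hd1 hd2
        exact Relation.ReflTransGen.head (Or.inl hstep1)
          (ih (l.eraseIdx (d t)) ((List.eraseIdx_sublist l (d t)).nodup hl))
  constructor
  · have := hchain π.length π hπnd
    rw [renumber_eq_self hπ] at this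
    exact this
  · intro σ hσP hσE
    obtain ⟨-, hIeq⟩ := hchaininv σ hσE
    have hlen : (pGamma d π).length = (keepP bad σ).length := by
      rw [hpg, ← hIeq]
      simp only [hInv]
      rw [renumber_length]
    constructor
    · rw [hlen]
      exact keepP_length_le bad σ
    · intro hle
      have : (keepP bad σ).length = σ.length := by omega
      have hks : keepP bad σ = σ := (keepP_sublist bad σ).eq_of_length this
      have : Inv σ = σ := by
        simp only [hInv]
        rw [hks, renumber_eq_self hσP]
      rw [← this, hIeq, ← hpg]

end PG

/-- for `γ ∈ {12★, 1★3}`, `p_γ(π)` is the primitive permutation of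
`π` under `123 ↔ γ`: it is equivalent to `π`, and every permutation equivalent
to `π` has length at least `|p_γ(π)|`, with equality only for `p_γ(π)` itself. -/
theorem pGamma_primitive :
    (∀ π : List ℕ, IsPermList π →
      PermEquiv pat123 pat12S π (p12star π) ∧
      ∀ σ : List ℕ, IsPermList σ → PermEquiv pat123 pat12S π σ →
        (p12star π).length ≤ σ.length ∧ (σ.length = (p12star π).length → σ = p12star π)) ∧
    (∀ π : List ℕ, IsPermList π →
      PermEquiv pat123 pat1S3 π (p1star3 π) ∧
      ∀ σ : List ℕ, IsPermList σ → PermEquiv pat123 pat1S3 π σ →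
        (p1star3 π).length ≤ σ.length ∧ (σ.length = (p1star3 π).length → σ = p1star3 π)) := by
  constructor
  · intro π hπ
    exact PG.primitive_side PG.bad12 (fun t => t.2.2) pat12S
      (fun l hl k hk hb => PG.isResult_of_bad12 hl hk hb)
      (fun π σ hπ' h => PG.isResult_12S_inv hπ' h)
      (fun π σ hπ' h => PG.isResult_12S_rev_inv hπ' h)
      (fun l i j k h1 h2 h3 h4 h5 => ⟨h3, i, j, h1, h2, h4, h5⟩)
      (fun l k hk hb => PG.keepP_eraseIdx hk hb (PG.bad12_erase_iff l k hk hb))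
      (fun {l l'} h i hi => PG.bad12_iff_ordIso h i hi)
      (fun {l} h => PG.keep12_of_avoid h)
      π hπ
  · intro π hπ
    exact PG.primitive_side PG.bad13 (fun t => t.2.1) pat1S3
      (fun l hl k hk hb => PG.isResult_of_bad13 hl hk hb)
      (fun π σ hπ' h => PG.isResult_1S3_inv hπ' h)
      (fun π σ hπ' h => PG.isResult_1S3_rev_inv hπ' h)
      (fun l i j k h1 h2 h3 h4 h5 => ⟨show j < l.length by omega, ⟨i, h1, h4⟩, ⟨k, h2, h3, h5⟩⟩)
      (fun l k hk hb => PG.keepP_eraseIdx hk hb (PG.bad13_erase_iff l k hk hb))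
      (fun {l l'} h i hi => PG.bad13_iff_ordIso h i hi)
      (fun {l} h => PG.keep13_of_avoid h)
      π hπ
end
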